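/- arXiv:1712.01599 — 5 statements merged into one kernel-verified Lean document; each statement's English description precedes it below -/
import Mathlib

section
/- For every β > 0 there exists a constant C > 0, depending only on β, such that for every integer s ∈ ℤ, the sum over k ∈ ℤ of 1 / (⟨k⟩^{2β} · (1 + ||k| − |s||)) is at most C. Here ⟨k⟩ = max(|k|, 1). In particular, the bound is uniform in s. -/
open MeasureTheory ENNReal Function

private lemma aux_rpow_neg_two (x : ℝ) (hx : 0 < x) : x ^ (-2 : ℝ) = (x ^ 2)⁻¹ := by
  rw [show (-2 : ℝ) = ((-2 : ℤ) : ℝ) by norm_num, Real.rpow_intCast]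
  simp only [zpow_neg]
  norm_cast

private lemma aux_summable_nat (q : ℝ) (hq : 1 < q) :
    Summable fun n : ℕ => (1 + (n : ℝ)) ^ (-q) := by
  have h := (Real.summable_nat_rpow_inv (p := q)).2 hq
  have h1 : Summable fun n : ℕ => (((n + 1 : ℕ) : ℝ) ^ q)⁻¹ :=
    (summable_nat_add_iff 1).2 h
  refine h1.congr fun n => ?_
  have hpos : (0 : ℝ) ≤ 1 + (n : ℝ) := by positivity
  rw [Real.rpow_neg hpos]
  push_cast
  rw [add_comm]

private lemma aux_summable_int (q : ℝ) (hq : 1 < q) :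
    Summable fun j : ℤ => (1 + |(j : ℝ)|) ^ (-q) := by
  have h := aux_summable_nat q hq
  apply Summable.of_nat_of_neg
  · refine h.congr fun n => ?_
    simp [abs_of_nonneg (by positivity : (0:ℝ) ≤ (n : ℝ))]
  · refine h.congr fun n => ?_
    push_cast
    rw [abs_neg, abs_of_nonneg (by positivity : (0:ℝ) ≤ (n : ℝ))]

private lemma aux_A_summable : Summable fun k : ℤ => (max |(k : ℝ)| 1) ^ (-2 : ℝ) := by
  have h := (aux_summable_int 2 one_lt_two).mul_left 4
  refine Summable.of_nonneg_of_le (fun k => by positivity) (fun k => ?_) h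
  have h1 : (0 : ℝ) < (1 + |(k : ℝ)|) / 2 := by positivity
  have h2 : (1 + |(k : ℝ)|) / 2 ≤ max |(k : ℝ)| 1 := by
    have := le_max_left |(k : ℝ)| 1
    have := le_max_right |(k : ℝ)| 1
    linarith
  calc (max |(k : ℝ)| 1) ^ (-2 : ℝ) ≤ ((1 + |(k : ℝ)|) / 2) ^ (-2 : ℝ) :=
        Real.rpow_le_rpow_of_nonpos h1 h2 (by norm_num)
    _ = 4 * (1 + |(k : ℝ)|) ^ (-2 : ℝ) := by
        rw [aux_rpow_neg_two _ h1, aux_rpow_neg_two _ (by positivity)]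
        field_simp
        ring

/-- Lemma A.2: for every `β > 0` there is `C > 0` depending only on `β` such that
for every `s ∈ ℤ`, `∑_{k ∈ ℤ} 1/(⟨k⟩^{2β} (1 + ||k| - |s||)) ≤ C`, where `⟨k⟩ = max(|k|,1)`. -/
theorem stmt_4 (β : ℝ) (hβ : 0 < β) :
    ∃ C > 0, ∀ s : ℤ,
      (∑' k : ℤ,
          1 / ((max |(k : ℝ)| 1) ^ (2 * β) * (1 + |(|(k : ℝ)| - |(s : ℝ)|)|))) ≤ C := by
  classical
  set p : ℝ := max 2 β⁻¹ with hp_def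
  have hp1 : 1 < p := lt_of_lt_of_le one_lt_two (le_max_left _ _)
  set q : ℝ := Real.conjExponent p with hq_def
  have hpq : p.HolderConjugate q := Real.HolderConjugate.conjExponent hp1
  have hq1 : 1 < q := hpq.symm.lt
  have hq0 : (0 : ℝ) ≤ q := hpq.symm.nonneg
  set w : ℤ → ℝ≥0∞ := fun j => ENNReal.ofReal ((1 + |(j : ℝ)|) ^ (-q)) with hw_def
  set A : ℝ≥0∞ := ∑' k : ℤ, ENNReal.ofReal ((max |(k : ℝ)| 1) ^ (-2 : ℝ)) with hA_def
  set B : ℝ≥0∞ := ∑' j : ℤ, w j with hB_def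
  have hA_ne : A ≠ ⊤ := by
    rw [hA_def, ← ENNReal.ofReal_tsum_of_nonneg (fun k => by positivity) aux_A_summable]
    exact ENNReal.ofReal_ne_top
  have hB_ne : B ≠ ⊤ := by
    rw [hB_def, hw_def,
      ← ENNReal.ofReal_tsum_of_nonneg (fun j => by positivity) (aux_summable_int q hq1)]
    exact ENNReal.ofReal_ne_top
  set Cb : ℝ≥0∞ := A ^ (1 / p) * (2 * B) ^ (1 / q) with hCb_def
  have hCb_ne : Cb ≠ ⊤ := by
    apply ENNReal.mul_ne_top
    · exact ENNReal.rpow_ne_top_of_nonneg hpq.one_div_nonneg hA_ne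
    · exact ENNReal.rpow_ne_top_of_nonneg hpq.symm.one_div_nonneg
        (ENNReal.mul_ne_top ENNReal.ofNat_ne_top hB_ne)
  refine ⟨Cb.toReal + 1, by positivity, fun s => ?_⟩
  set F : ℤ → ℝ≥0∞ := fun k => ENNReal.ofReal ((max |(k : ℝ)| 1) ^ (-(2 * β))) with hF_def
  set G : ℤ → ℝ≥0∞ := fun k =>
    ENNReal.ofReal ((1 + |(|(k : ℝ)| - |(s : ℝ)|)|)⁻¹) with hG_def
  have holder : (∑' k : ℤ, F k * G k)
      ≤ (∑' k : ℤ, F k ^ p) ^ (1 / p) * (∑' k : ℤ, G k ^ q) ^ (1 / q) := by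
    have h := ENNReal.lintegral_mul_le_Lp_mul_Lq (Measure.count : Measure ℤ) hpq
      (f := F) (g := G) (measurable_of_countable _).aemeasurable
      (measurable_of_countable _).aemeasurable
    simpa [lintegral_count] using h
  -- bound for the F factor
  have hβp : 1 ≤ β * p := by
    have h1 : β⁻¹ ≤ p := le_max_right _ _
    have h2 : β * β⁻¹ ≤ β * p := mul_le_mul_of_nonneg_left h1 hβ.le
    rwa [mul_inv_cancel₀ hβ.ne'] at h2
  have hFp : (∑' k : ℤ, F k ^ p) ≤ A := by
    rw [hA_def]
    refine ENNReal.tsum_le_tsum fun k => ?_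
    have hx1 : (1 : ℝ) ≤ max |(k : ℝ)| 1 := le_max_right _ _
    have hx0 : (0 : ℝ) < max |(k : ℝ)| 1 := lt_of_lt_of_le zero_lt_one hx1
    have hxn : (0 : ℝ) ≤ (max |(k : ℝ)| 1) ^ (-(2 * β)) :=
      (Real.rpow_pos_of_pos hx0 _).le
    rw [hF_def]
    rw [ENNReal.ofReal_rpow_of_nonneg hxn hpq.nonneg]
    apply ENNReal.ofReal_le_ofReal
    rw [← Real.rpow_mul hx0.le]
    exact Real.rpow_le_rpow_of_exponent_le hx1 (by nlinarith)
  -- bound for the G factor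
  have hGq : (∑' k : ℤ, G k ^ q) ≤ 2 * B := by
    have hterm : ∀ k : ℤ, G k ^ q = w (|k| - |s|) := by
      intro k
      have hy : (0 : ℝ) ≤ 1 + |(|(k : ℝ)| - |(s : ℝ)|)| := by positivity
      rw [hG_def, hw_def]
      rw [ENNReal.ofReal_rpow_of_nonneg (by positivity) hq0]
      congr 1
      rw [Real.inv_rpow hy, ← Real.rpow_neg hy]
      congr 2
      push_cast
      ring
    calc (∑' k : ℤ, G k ^ q) = ∑' k : ℤ, w (|k| - |s|) := tsum_congr hterm
      _ = (∑' x : {k : ℤ | 0 ≤ k}, w (|(x : ℤ)| - |s|))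
            + ∑' x : ↥{k : ℤ | 0 ≤ k}ᶜ, w (|(x : ℤ)| - |s|) :=
          (Summable.tsum_add_tsum_compl ENNReal.summable ENNReal.summable).symm
      _ ≤ B + B := by
          rw [hB_def]
          gcongr
          · calc (∑' x : {k : ℤ | 0 ≤ k}, w (|(x : ℤ)| - |s|))
                = ∑' x : {k : ℤ | 0 ≤ k}, w ((x : ℤ) - |s|) :=
                  tsum_congr fun x => by rw [abs_of_nonneg x.2]
              _ ≤ ∑' j : ℤ, w j := by
                  exact ENNReal.tsum_comp_le_tsum_of_injective
                    (f := fun x : {k : ℤ | 0 ≤ k} => (x : ℤ) - |s|)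
                    (fun x y hxy => Subtype.ext (by have h := hxy; dsimp only at h; omega)) w
          · calc (∑' x : ↥{k : ℤ | 0 ≤ k}ᶜ, w (|(x : ℤ)| - |s|))
                = ∑' x : ↥{k : ℤ | 0 ≤ k}ᶜ, w (-(x : ℤ) - |s|) :=
                  tsum_congr fun x => by
                    have hx : ¬ (0 : ℤ) ≤ (x : ℤ) := x.2
                    rw [abs_of_neg (not_le.mp hx)]
              _ ≤ ∑' j : ℤ, w j := by
                  exact ENNReal.tsum_comp_le_tsum_of_injective
                    (f := fun x : ↥{k : ℤ | 0 ≤ k}ᶜ => -(x : ℤ) - |s|)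
                    (fun x y hxy => Subtype.ext (by have h := hxy; dsimp only at h; omega)) w
      _ = 2 * B := (two_mul B).symm
  have hsum_le : (∑' k : ℤ, F k * G k) ≤ Cb := by
    refine holder.trans ?_
    rw [hCb_def]
    exact mul_le_mul' (ENNReal.rpow_le_rpow hFp hpq.one_div_nonneg)
      (ENNReal.rpow_le_rpow hGq hpq.symm.one_div_nonneg)
  have hfg : ∀ k : ℤ, ENNReal.ofReal
      (1 / ((max |(k : ℝ)| 1) ^ (2 * β) * (1 + |(|(k : ℝ)| - |(s : ℝ)|)|))) = F k * G k := by
    intro k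
    have hx1 : (1 : ℝ) ≤ max |(k : ℝ)| 1 := le_max_right _ _
    have hx0 : (0 : ℝ) < max |(k : ℝ)| 1 := lt_of_lt_of_le zero_lt_one hx1
    have hxp : (0 : ℝ) < (max |(k : ℝ)| 1) ^ (2 * β) := Real.rpow_pos_of_pos hx0 _
    rw [hF_def, hG_def, ← ENNReal.ofReal_mul (by positivity)]
    congr 1
    rw [Real.rpow_neg hx0.le, one_div, mul_inv]
  have hfin : (∑' k : ℤ, F k * G k) ≠ ⊤ :=
    ne_top_of_le_ne_top hCb_ne hsum_le
  have hnn : ∀ k : ℤ,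
      (0 : ℝ) ≤ 1 / ((max |(k : ℝ)| 1) ^ (2 * β) * (1 + |(|(k : ℝ)| - |(s : ℝ)|)|)) := by
    intro k
    have hx0 : (0 : ℝ) < max |(k : ℝ)| 1 := lt_of_lt_of_le zero_lt_one (le_max_right _ _)
    have hxp : (0 : ℝ) < (max |(k : ℝ)| 1) ^ (2 * β) := Real.rpow_pos_of_pos hx0 _
    positivity
  have heq : (∑' k : ℤ,
      1 / ((max |(k : ℝ)| 1) ^ (2 * β) * (1 + |(|(k : ℝ)| - |(s : ℝ)|)|)))
      = (∑' k : ℤ, F k * G k).toReal := by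
    rw [ENNReal.tsum_toReal_eq
      (fun k => ENNReal.mul_ne_top ENNReal.ofReal_ne_top ENNReal.ofReal_ne_top)]
    refine tsum_congr fun k => ?_
    rw [← hfg k, ENNReal.toReal_ofReal (hnn k)]
  rw [heq]
  have hfinal := ENNReal.toReal_mono hCb_ne hsum_le
  linarith
end

section
/- For every β > 0 there exists C > 0 depending only on β such that for every s ∈ ℤ, ∑_{k ∈ ℤ} ⟨s⟩ / (⟨k⟩^{2β+1} · (1 + ||k| − |s||)) ≤ C, where ⟨k⟩ = max(|k|,1). -/
open Real

private lemma key_pointwise (β : ℝ) (hβ : 0 < β) (K S d : ℝ) (hK : 1 ≤ K) (hS : 1 ≤ S)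
    (hd : 0 ≤ d) (hSKd : S ≤ K + d) :
    S / (K ^ (2*β+1) * (1 + d)) ≤ 2 / K ^ (2*β+1) + 2 / (1 + d) ^ (2*β+1) := by
  have hK0 : (0:ℝ) < K := by linarith
  have hd1 : (0:ℝ) < 1 + d := by linarith
  have hKp : 0 < K ^ (2*β+1) := rpow_pos_of_pos hK0 _
  have hdp : 0 < (1+d) ^ (2*β+1) := rpow_pos_of_pos hd1 _
  rcases le_or_gt S (2*(1+d)) with h | h
  · have h1 : S / (K ^ (2*β+1) * (1 + d)) ≤ 2 / K ^ (2*β+1) := by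
      rw [div_le_div_iff₀ (by positivity) hKp]
      nlinarith [hKp.le, mul_le_mul_of_nonneg_right h hKp.le]
    have h2 : 0 ≤ 2 / (1 + d) ^ (2*β+1) := by positivity
    linarith
  · have hKS : S/2 + 1 ≤ K := by linarith
    have e1 : K ^ (2*β+1) = K ^ (2*β) * K := by
      rw [Real.rpow_add hK0, Real.rpow_one]
    have e2 : (1+d) ^ (2*β+1) = (1+d) ^ (2*β) * (1+d) := by
      rw [Real.rpow_add hd1, Real.rpow_one]
    have m1 : (1+d) ^ (2*β) ≤ K ^ (2*β) := by
      apply Real.rpow_le_rpow hd1.le (by linarith) (by linarith)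
    have h1 : S / (K ^ (2*β+1) * (1 + d)) ≤ 2 / (1 + d) ^ (2*β+1) := by
      rw [div_le_div_iff₀ (by positivity) hdp, e1, e2]
      nlinarith [mul_le_mul_of_nonneg_right m1 (mul_nonneg (by linarith : (0:ℝ) ≤ S) hd1.le),
        mul_le_mul_of_nonneg_right hKS (mul_pos (rpow_pos_of_pos hd1 (2*β)) hd1).le,
        mul_pos (rpow_pos_of_pos hK0 (2*β)) hd1]
    have h2 : 0 ≤ 2 / K ^ (2*β+1) := by positivity
    linarith

/-- For every `β > 0` there is `C > 0` depending only on `β` such that for every `s ∈ ℤ`,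
`∑_{k ∈ ℤ} ⟨s⟩ / (⟨k⟩^{2β+1} (1 + ||k| - |s||)) ≤ C`, where `⟨k⟩ = max(|k|,1)`. -/
theorem stmt_5 (β : ℝ) (hβ : 0 < β) :
    ∃ C > 0, ∀ s : ℤ,
      (∑' k : ℤ, (max |(s : ℝ)| 1) /
          ((max |(k : ℝ)| 1) ^ (2 * β + 1) * (1 + |(|(k : ℝ)| - |(s : ℝ)|)|))) ≤ C := by
  set p : ℝ := 2 * β + 1 with hpdef
  have hp1 : 1 < p := by simp only [hpdef]; linarith
  have hp0 : 0 < p := by linarith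
  -- summability of 1/⟨k⟩^p over ℤ
  have hnat : Summable (fun n : ℕ => 1 / (max (n:ℝ) 1) ^ p) := by
    rw [← summable_nat_add_iff 1]
    apply ((summable_nat_add_iff 1).2 (Real.summable_one_div_nat_rpow.mpr hp1)).congr
    intro n
    have h1 : max ((n:ℝ) + 1) 1 = (n:ℝ) + 1 := by
      rw [max_eq_left]
      have := Nat.cast_nonneg (α := ℝ) n
      linarith
    push_cast
    rw [h1]
  have hS1 : Summable (fun k : ℤ => 1 / (max |(k:ℝ)| 1) ^ p) := by
    apply Summable.of_nat_of_neg
    · apply hnat.congr; intro n; norm_num [abs_of_nonneg (Nat.cast_nonneg (α := ℝ) n)]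
    · apply hnat.congr; intro n
      push_cast
      rw [abs_neg, abs_of_nonneg (Nat.cast_nonneg (α := ℝ) n)]
  have hS0 : Summable (fun k : ℤ => 1 / (1 + |(k:ℝ)|) ^ p) := by
    apply hS1.of_nonneg_of_le (fun k => by positivity)
    intro k
    apply div_le_div_of_nonneg_left one_pos.le (rpow_pos_of_pos (by positivity) _)
    apply Real.rpow_le_rpow (by positivity) _ hp0.le
    rcases le_or_gt 1 |(k:ℝ)| with h | h
    · rw [max_eq_left h]; linarith
    · rw [max_eq_right h.le]; linarith [abs_nonneg (k:ℝ)]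
  set T1 : ℝ := ∑' k : ℤ, 1 / (max |(k:ℝ)| 1) ^ p with hT1
  set T0 : ℝ := ∑' k : ℤ, 1 / (1 + |(k:ℝ)|) ^ p with hT0
  have hT1nn : 0 ≤ T1 := tsum_nonneg (fun k => by positivity)
  have hT0nn : 0 ≤ T0 := tsum_nonneg (fun k => by positivity)
  refine ⟨2 * T1 + 4 * T0 + 1, by linarith, fun s => ?_⟩
  set n : ℤ := |s| with hn
  have hncast : ((n:ℤ):ℝ) = |(s:ℝ)| := by simp [hn]
  -- shifted summable functions
  have hSm : Summable (fun k : ℤ => 1 / (1 + |(k:ℝ) - (n:ℝ)|) ^ p) := by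
    have h := (Equiv.summable_iff (Equiv.subRight n)
      (f := fun k : ℤ => 1 / (1 + |(k:ℝ)|) ^ p)).2 hS0
    apply h.congr
    intro k
    simp only [Function.comp, Equiv.subRight_apply]
    push_cast
    ring_nf
  have hSp : Summable (fun k : ℤ => 1 / (1 + |(k:ℝ) + (n:ℝ)|) ^ p) := by
    have h := (Equiv.summable_iff (Equiv.addRight n)
      (f := fun k : ℤ => 1 / (1 + |(k:ℝ)|) ^ p)).2 hS0
    apply h.congr
    intro k
    simp only [Function.comp, Equiv.coe_addRight]
    push_cast
    ring_nf
  have htm : (∑' k : ℤ, 1 / (1 + |(k:ℝ) - (n:ℝ)|) ^ p) = T0 := by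
    rw [hT0, ← Equiv.tsum_eq (Equiv.subRight n) (fun k : ℤ => 1 / (1 + |(k:ℝ)|) ^ p)]
    apply tsum_congr
    intro k
    simp only [Equiv.subRight_apply]
    push_cast
    ring_nf
  have htp : (∑' k : ℤ, 1 / (1 + |(k:ℝ) + (n:ℝ)|) ^ p) = T0 := by
    rw [hT0, ← Equiv.tsum_eq (Equiv.addRight n) (fun k : ℤ => 1 / (1 + |(k:ℝ)|) ^ p)]
    apply tsum_congr
    intro k
    simp only [Equiv.coe_addRight]
    push_cast
    ring_nf
  -- summability of the (doubled) bounding functions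
  have c1 : Summable (fun k : ℤ => 2 / (max |(k:ℝ)| 1) ^ p) := by
    simpa [mul_one_div, div_eq_mul_inv] using hS1.mul_left 2
  have c2 : Summable (fun k : ℤ => 2 / (1 + |(k:ℝ) - (n:ℝ)|) ^ p) := by
    simpa [mul_one_div, div_eq_mul_inv] using hSm.mul_left 2
  have c3 : Summable (fun k : ℤ => 2 / (1 + |(k:ℝ) + (n:ℝ)|) ^ p) := by
    simpa [mul_one_div, div_eq_mul_inv] using hSp.mul_left 2
  -- pointwise bound
  have hpb : ∀ k : ℤ, (max |(s : ℝ)| 1) /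
      ((max |(k : ℝ)| 1) ^ p * (1 + |(|(k : ℝ)| - |(s : ℝ)|)|)) ≤
      2 / (max |(k:ℝ)| 1) ^ p +
        (2 / (1 + |(k:ℝ) - (n:ℝ)|) ^ p + 2 / (1 + |(k:ℝ) + (n:ℝ)|) ^ p) := by
    intro k
    have hSKd : max |(s:ℝ)| 1 ≤ max |(k:ℝ)| 1 + |(|(k:ℝ)| - |(s:ℝ)|)| := by
      have h1 : |(s:ℝ)| - |(k:ℝ)| ≤ |(|(k:ℝ)| - |(s:ℝ)|)| := by
        rw [abs_sub_comm]
        exact le_abs_self _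
      have h2 : |(k:ℝ)| ≤ max |(k:ℝ)| 1 := le_max_left _ _
      have h3 : (1:ℝ) ≤ max |(k:ℝ)| 1 := le_max_right _ _
      rcases le_or_gt |(s:ℝ)| 1 with h | h
      · rw [max_eq_right h]; linarith [abs_nonneg (|(k:ℝ)| - |(s:ℝ)|)]
      · rw [max_eq_left h.le]; linarith
    have hkey := key_pointwise β hβ (max |(k:ℝ)| 1) (max |(s:ℝ)| 1) (|(|(k:ℝ)| - |(s:ℝ)|)|)
      (le_max_right _ _) (le_max_right _ _) (abs_nonneg _) hSKd
    rw [← hpdef] at hkey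
    refine hkey.trans ?_
    have hmono : 2 / (1 + |(|(k:ℝ)| - |(s:ℝ)|)|) ^ p ≤
        2 / (1 + |(k:ℝ) - (n:ℝ)|) ^ p + 2 / (1 + |(k:ℝ) + (n:ℝ)|) ^ p := by
      rcases le_or_gt 0 (k:ℝ) with hk | hk
      · have h1 : |(k:ℝ)| = (k:ℝ) := abs_of_nonneg hk
        rw [h1, hncast]
        have h4 : (0:ℝ) ≤ 2 / (1 + |((k:ℝ) + |(s:ℝ)|)|) ^ p := by positivity
        linarith
      · have h1 : |(k:ℝ)| = -(k:ℝ) := abs_of_neg hk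
        rw [h1, hncast]
        have h2 : |(-(k:ℝ) - |(s:ℝ)|)| = |((k:ℝ) + |(s:ℝ)|)| := by
          rw [(by ring : -(k:ℝ) - |(s:ℝ)| = -((k:ℝ) + |(s:ℝ)|)), abs_neg]
        rw [h2]
        have h4 : (0:ℝ) ≤ 2 / (1 + |((k:ℝ) - |(s:ℝ)|)|) ^ p := by positivity
        linarith
    linarith
  have hSF : Summable (fun k : ℤ => (max |(s : ℝ)| 1) /
      ((max |(k : ℝ)| 1) ^ p * (1 + |(|(k : ℝ)| - |(s : ℝ)|)|))) :=
    Summable.of_nonneg_of_le (fun k => by positivity) hpb (c1.add (c2.add c3))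
  calc (∑' k : ℤ, (max |(s : ℝ)| 1) /
          ((max |(k : ℝ)| 1) ^ p * (1 + |(|(k : ℝ)| - |(s : ℝ)|)|)))
      ≤ ∑' k : ℤ, (2 / (max |(k:ℝ)| 1) ^ p +
          (2 / (1 + |(k:ℝ) - (n:ℝ)|) ^ p + 2 / (1 + |(k:ℝ) + (n:ℝ)|) ^ p)) :=
        Summable.tsum_le_tsum hpb hSF (c1.add (c2.add c3))
    _ = (∑' k : ℤ, 2 / (max |(k:ℝ)| 1) ^ p) +
          ((∑' k : ℤ, 2 / (1 + |(k:ℝ) - (n:ℝ)|) ^ p) +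
            (∑' k : ℤ, 2 / (1 + |(k:ℝ) + (n:ℝ)|) ^ p)) := by
        rw [Summable.tsum_add c1 (c2.add c3), Summable.tsum_add c2 c3]
    _ = 2 * T1 + (2 * T0 + 2 * T0) := by
        have e1 : (∑' k : ℤ, 2 / (max |(k:ℝ)| 1) ^ p) = 2 * T1 := by
          rw [hT1, ← tsum_mul_left]
          exact tsum_congr fun k => (mul_one_div (2:ℝ) _).symm
        have e2 : (∑' k : ℤ, 2 / (1 + |(k:ℝ) - (n:ℝ)|) ^ p) = 2 * T0 := by
          rw [← htm, ← tsum_mul_left]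
          exact tsum_congr fun k => (mul_one_div (2:ℝ) _).symm
        have e3 : (∑' k : ℤ, 2 / (1 + |(k:ℝ) + (n:ℝ)|) ^ p) = 2 * T0 := by
          rw [← htp, ← tsum_mul_left]
          exact tsum_congr fun k => (mul_one_div (2:ℝ) _).symm
        rw [e1, e2, e3]
    _ ≤ 2 * T1 + 4 * T0 + 1 := by linarith
end

section
/- Let β > 0 and let A, B : ℤ × ℤ → M₂(ℂ) be infinite matrices of 2×2 blocks with |A|_{β+} := sup_{s,s'} (1 + ||s|−|s'||)⟨s⟩^β⟨s'⟩^β ‖A_s^{s'}‖_∞ < ∞ and |B|_β := sup_{s,s'} ⟨s⟩^β⟨s'⟩^β ‖B_s^{s'}‖_∞ < ∞. Then the product AB (with (AB)_s^{s'} = ∑_{k∈ℤ} A_s^k B_k^{s'}) satisfies |AB|_β ≤ C |A|_{β+} |B|_β for a constant C depending only on β. -/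
open Real

/-- Entrywise sup norm on `2×2` complex matrices. -/
noncomputable def mnorm (M : Matrix (Fin 2) (Fin 2) ℂ) : ℝ :=
  ⨆ i : Fin 2, ⨆ j : Fin 2, ‖M i j‖

lemma abs_le_mnorm (M : Matrix (Fin 2) (Fin 2) ℂ) (i j : Fin 2) :
    ‖M i j‖ ≤ mnorm M := by
  have h1 : ‖M i j‖ ≤ ⨆ j', ‖M i j'‖ :=
    le_ciSup (f := fun j' => ‖M i j'‖) (Set.Finite.bddAbove (Set.finite_range _)) j
  exact h1.trans (le_ciSup (f := fun i' => ⨆ j', ‖M i' j'‖)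
    (Set.Finite.bddAbove (Set.finite_range _)) i)

lemma mnorm_nonneg (M : Matrix (Fin 2) (Fin 2) ℂ) : 0 ≤ mnorm M :=
  le_trans (norm_nonneg _) (abs_le_mnorm M 0 0)

lemma mnorm_le {M : Matrix (Fin 2) (Fin 2) ℂ} {c : ℝ}
    (h : ∀ i j, ‖M i j‖ ≤ c) : mnorm M ≤ c :=
  ciSup_le fun i => ciSup_le fun j => h i j

lemma mnorm_mul_le (M N : Matrix (Fin 2) (Fin 2) ℂ) :
    mnorm (M * N) ≤ 2 * mnorm M * mnorm N := by
  apply mnorm_le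
  intro i j
  have hmul : (M * N) i j = M i 0 * N 0 j + M i 1 * N 1 j := by
    simp [Matrix.mul_apply, Fin.sum_univ_two]
  rw [hmul]
  calc ‖M i 0 * N 0 j + M i 1 * N 1 j‖
      ≤ ‖M i 0 * N 0 j‖ + ‖M i 1 * N 1 j‖ :=
        norm_add_le _ _
    _ = ‖M i 0‖ * ‖N 0 j‖
          + ‖M i 1‖ * ‖N 1 j‖ := by simp
    _ ≤ mnorm M * mnorm N + mnorm M * mnorm N :=
        add_le_add
          (mul_le_mul (abs_le_mnorm M i 0) (abs_le_mnorm N 0 j)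
            (norm_nonneg _) (mnorm_nonneg M))
          (mul_le_mul (abs_le_mnorm M i 1) (abs_le_mnorm N 1 j)
            (norm_nonneg _) (mnorm_nonneg M))
    _ = 2 * mnorm M * mnorm N := by ring

set_option maxHeartbeats 2000000 in
/-- Lemma 3.1(1): if `|A|_{β+} ≤ nA` and `|B|_β ≤ nB` (weighted sup norms of the
`2×2` blocks), then the block product `AB` converges and `|AB|_β ≤ C nA nB`,
with `C` depending only on `β`. -/
theorem stmt_6 (β : ℝ) (hβ : 0 < β) :
    ∃ C > 0, ∀ (A B : ℤ → ℤ → Matrix (Fin 2) (Fin 2) ℂ) (nA nB : ℝ),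
      (∀ s s' : ℤ,
        (1 + |(|(s : ℝ)| - |(s' : ℝ)|)|) * (max |(s : ℝ)| 1) ^ β * (max |(s' : ℝ)| 1) ^ β *
            mnorm (A s s') ≤ nA) →
      (∀ s s' : ℤ,
        (max |(s : ℝ)| 1) ^ β * (max |(s' : ℝ)| 1) ^ β * mnorm (B s s') ≤ nB) →
      ∀ s s' : ℤ,
        Summable (fun k : ℤ => A s k * B k s') ∧
        (max |(s : ℝ)| 1) ^ β * (max |(s' : ℝ)| 1) ^ β *
            mnorm (∑' k : ℤ, A s k * B k s') ≤ C * nA * nB := by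
  set αe : ℝ := 1 + 2 * β with hαe
  have hαe1 : 1 < αe := by nlinarith
  have hαe0 : 0 ≤ αe := by linarith
  set gZ : ℤ → ℝ := fun k => (1 + |(k : ℝ)|) ^ (-αe) with hgZ
  have hgZnn : ∀ k, 0 ≤ gZ k := fun k => rpow_nonneg (by positivity) _
  -- summability of gZ
  have hn : Summable (fun n : ℕ => ((n : ℝ)) ^ (-αe)) :=
    Real.summable_nat_rpow.mpr (by linarith)
  have hn1 : Summable (fun n : ℕ => (1 + (n : ℝ)) ^ (-αe)) := by
    have h := hn.comp_injective (add_right_injective 1)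
    exact h.congr fun n => by simp only [Function.comp_apply]; push_cast; ring_nf
  have hg : Summable gZ := by
    apply Summable.of_nat_of_neg
    · exact hn1.congr fun n => by simp [hgZ]
    · exact hn1.congr fun n => by simp [hgZ]
  set S : ℝ := ∑' k : ℤ, gZ k with hS
  have hS0 : 0 < S := by
    refine Summable.tsum_pos hg hgZnn 0 ?_
    simp [hgZ]
  refine ⟨2 * (2 + 2 ^ αe) * S, by
      have h2 : (0:ℝ) < 2 + 2 ^ αe := by positivity
      positivity, ?_⟩
  intro A B nA nB hA hB s s'
  have hnA : 0 ≤ nA :=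
    le_trans (mul_nonneg (by positivity) (mnorm_nonneg _)) (hA 0 0)
  have hnB : 0 ≤ nB :=
    le_trans (mul_nonneg (by positivity) (mnorm_nonneg _)) (hB 0 0)
  set a : ℝ := max |(s : ℝ)| 1 with ha
  set c : ℝ := max |(s' : ℝ)| 1 with hc
  have ha1 : (1:ℝ) ≤ a := le_max_right _ _
  have hc1 : (1:ℝ) ≤ c := le_max_right _ _
  have haβ1 : (1:ℝ) ≤ a ^ β := Real.one_le_rpow ha1 hβ.le
  have hcβ1 : (1:ℝ) ≤ c ^ β := Real.one_le_rpow hc1 hβ.le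
  have hac1 : (1:ℝ) ≤ a ^ β * c ^ β := by nlinarith [haβ1, hcβ1]
  have hac0 : (0:ℝ) < a ^ β * c ^ β := by linarith
  set F : ℤ → ℝ := fun k => 2 * nA * nB * (gZ (k - s) + gZ (k + s) + 2 ^ αe * gZ k)
    with hF
  -- the key pointwise bound
  have hkey : ∀ k : ℤ, a ^ β * c ^ β * mnorm (A s k * B k s') ≤ F k := by
    intro k
    set b : ℝ := max |(k : ℝ)| 1 with hb
    have hb1 : (1:ℝ) ≤ b := le_max_right _ _
    have hb0 : (0:ℝ) < b := by linarith
    set D : ℝ := 1 + |(|(s : ℝ)| - |(k : ℝ)|)| with hD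
    have hD1 : (1:ℝ) ≤ D := by rw [hD]; linarith [abs_nonneg (|(s : ℝ)| - |(k : ℝ)|)]
    have hD0 : (0:ℝ) < D := by linarith
    have hbβ0 : (0:ℝ) < b ^ β := rpow_pos_of_pos hb0 _
    have hP0 : 0 ≤ mnorm (A s k) := mnorm_nonneg _
    have hQ0 : 0 ≤ mnorm (B k s') := mnorm_nonneg _
    have hR0 : 0 ≤ mnorm (A s k * B k s') := mnorm_nonneg _
    have hPA : D * a ^ β * b ^ β * mnorm (A s k) ≤ nA := hA s k
    have hPB : b ^ β * c ^ β * mnorm (B k s') ≤ nB := hB k s'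
    have hu0 : 0 ≤ D * a ^ β * b ^ β * mnorm (A s k) := by positivity
    have hv0 : 0 ≤ b ^ β * c ^ β * mnorm (B k s') := by positivity
    have huv : (D * a ^ β * b ^ β * mnorm (A s k)) * (b ^ β * c ^ β * mnorm (B k s'))
        ≤ nA * nB := mul_le_mul hPA hPB hv0 hnA
    have hcore : (a ^ β * c ^ β * mnorm (A s k * B k s')) * (D * (b ^ β * b ^ β))
        ≤ 2 * nA * nB := by
      have hm := mnorm_mul_le (A s k) (B k s')
      have h1 : (a ^ β * c ^ β * mnorm (A s k * B k s')) * (D * (b ^ β * b ^ β))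
          ≤ (a ^ β * c ^ β * (2 * mnorm (A s k) * mnorm (B k s'))) * (D * (b ^ β * b ^ β)) := by
        apply mul_le_mul_of_nonneg_right _ (by positivity)
        exact mul_le_mul_of_nonneg_left hm (by positivity)
      have h2 : (a ^ β * c ^ β * (2 * mnorm (A s k) * mnorm (B k s'))) * (D * (b ^ β * b ^ β))
          = 2 * ((D * a ^ β * b ^ β * mnorm (A s k)) * (b ^ β * c ^ β * mnorm (B k s'))) := by
        ring
      nlinarith [huv]
    have h2nAnB : (0:ℝ) ≤ 2 * nA * nB := by positivity
    -- now split on whether b ≤ D or D ≤ b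
    rcases le_total b D with hbD | hDb
    · -- use the b factor
      have hXb : a ^ β * c ^ β * mnorm (A s k * B k s') ≤ 2 * nA * nB * b ^ (-αe) := by
        rw [Real.rpow_neg hb0.le, le_mul_inv_iff₀ (rpow_pos_of_pos hb0 _)]
        have hbsplit : b ^ αe = b * (b ^ β * b ^ β) := by
          rw [show αe = 1 + (β + β) by rw [hαe]; ring, Real.rpow_add hb0,
            Real.rpow_add hb0, Real.rpow_one]
        calc a ^ β * c ^ β * mnorm (A s k * B k s') * b ^ αe
            = (a ^ β * c ^ β * mnorm (A s k * B k s')) * (b * (b ^ β * b ^ β)) := by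
              rw [hbsplit]
          _ ≤ (a ^ β * c ^ β * mnorm (A s k * B k s')) * (D * (b ^ β * b ^ β)) := by
              apply mul_le_mul_of_nonneg_left _ (by positivity)
              exact mul_le_mul_of_nonneg_right hbD (by positivity)
          _ ≤ 2 * nA * nB := hcore
      have hb2 : (1 + |(k : ℝ)|) ≤ 2 * b := by
        have h1 := le_max_left |(k : ℝ)| (1:ℝ)
        have h2 := le_max_right |(k : ℝ)| (1:ℝ)
        rw [hb]
        linarith
      have hbα : (1 + |(k : ℝ)|) ^ αe ≤ 2 ^ αe * b ^ αe := by
        calc (1 + |(k : ℝ)|) ^ αe ≤ (2 * b) ^ αe :=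
              Real.rpow_le_rpow (by positivity) hb2 hαe0
          _ = 2 ^ αe * b ^ αe := Real.mul_rpow (by norm_num) hb0.le
      have hbneg : b ^ (-αe) ≤ 2 ^ αe * gZ k := by
        simp only [hgZ]
        rw [Real.rpow_neg hb0.le,
          Real.rpow_neg (by positivity : (0:ℝ) ≤ 1 + |(k : ℝ)|)]
        rw [le_mul_inv_iff₀ (rpow_pos_of_pos (by positivity : (0:ℝ) < 1 + |(k : ℝ)|) _),
          inv_mul_le_iff₀ (rpow_pos_of_pos hb0 _)]
        calc (1 + |(k : ℝ)|) ^ αe ≤ 2 ^ αe * b ^ αe := hbα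
          _ = b ^ αe * 2 ^ αe := by ring
      calc a ^ β * c ^ β * mnorm (A s k * B k s')
          ≤ 2 * nA * nB * b ^ (-αe) := hXb
        _ ≤ 2 * nA * nB * (2 ^ αe * gZ k) :=
            mul_le_mul_of_nonneg_left hbneg h2nAnB
        _ ≤ F k := by
            simp only [hF]
            exact mul_le_mul_of_nonneg_left
              (by linarith [hgZnn (k - s), hgZnn (k + s)]) h2nAnB
    · -- use the D factor
      have hXD : a ^ β * c ^ β * mnorm (A s k * B k s') ≤ 2 * nA * nB * D ^ (-αe) := by
        rw [Real.rpow_neg hD0.le, le_mul_inv_iff₀ (rpow_pos_of_pos hD0 _)]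
        have hDsplit : D ^ αe = D * (D ^ β * D ^ β) := by
          rw [show αe = 1 + (β + β) by rw [hαe]; ring, Real.rpow_add hD0,
            Real.rpow_add hD0, Real.rpow_one]
        calc a ^ β * c ^ β * mnorm (A s k * B k s') * D ^ αe
            = (a ^ β * c ^ β * mnorm (A s k * B k s')) * (D * (D ^ β * D ^ β)) := by
              rw [hDsplit]
          _ ≤ (a ^ β * c ^ β * mnorm (A s k * B k s')) * (D * (b ^ β * b ^ β)) := by
              apply mul_le_mul_of_nonneg_left _ (by positivity)
              apply mul_le_mul_of_nonneg_left _ hD0.le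
              have hDβ : D ^ β ≤ b ^ β := Real.rpow_le_rpow hD0.le hDb hβ.le
              exact mul_le_mul hDβ hDβ (by positivity) (by positivity)
          _ ≤ 2 * nA * nB := hcore
      -- D equals one of the translated weights
      have hd : D = 1 + |(k : ℝ) - (s : ℝ)| ∨ D = 1 + |(k : ℝ) + (s : ℝ)| := by
        rw [hD]
        rcases abs_cases ((s : ℝ)) with ⟨hs, _⟩ | ⟨hs, _⟩ <;>
          rcases abs_cases ((k : ℝ)) with ⟨hk, _⟩ | ⟨hk, _⟩
        · left; rw [hs, hk, abs_sub_comm]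
        · right; rw [hs, hk]; rw [show (s:ℝ) - -(k:ℝ) = (k:ℝ) + (s:ℝ) by ring]
        · right; rw [hs, hk]; rw [show -(s:ℝ) - (k:ℝ) = -((k:ℝ) + (s:ℝ)) by ring, abs_neg]
        · left; rw [hs, hk]; rw [show -(s:ℝ) - -(k:ℝ) = (k:ℝ) - (s:ℝ) by ring]
      have hDg : D ^ (-αe) ≤ gZ (k - s) + gZ (k + s) := by
        rcases hd with h | h
        · have : D ^ (-αe) = gZ (k - s) := by rw [h]; simp only [hgZ]; push_cast; ring_nf
          rw [this]; linarith [hgZnn (k + s)]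
        · have : D ^ (-αe) = gZ (k + s) := by rw [h]; simp only [hgZ]; push_cast; ring_nf
          rw [this]; linarith [hgZnn (k - s)]
      calc a ^ β * c ^ β * mnorm (A s k * B k s')
          ≤ 2 * nA * nB * D ^ (-αe) := hXD
        _ ≤ 2 * nA * nB * (gZ (k - s) + gZ (k + s)) :=
            mul_le_mul_of_nonneg_left hDg h2nAnB
        _ ≤ F k := by
            simp only [hF]
            have h2g : (0:ℝ) ≤ 2 ^ αe * gZ k :=
              mul_nonneg (Real.rpow_nonneg (by norm_num) αe) (hgZnn k)
            exact mul_le_mul_of_nonneg_left (by linarith) h2nAnB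
  -- summability of F
  have hg1 : Summable (fun k : ℤ => gZ (k - s)) :=
    ((Equiv.subRight s).summable_iff.mpr hg)
  have hg2 : Summable (fun k : ℤ => gZ (k + s)) :=
    ((Equiv.addRight s).summable_iff.mpr hg)
  have hFsum : Summable F :=
    (((hg1.add hg2).add (hg.mul_left _)).mul_left _)
  -- bound on mnorm of each product term
  have hmF : ∀ k : ℤ, mnorm (A s k * B k s') ≤ F k := fun k =>
    le_trans (le_mul_of_one_le_left (mnorm_nonneg _) hac1) (hkey k)
  -- entrywise summability
  have hent : ∀ i j : Fin 2, Summable (fun k : ℤ => (A s k * B k s') i j) := by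
    intro i j
    apply Summable.of_norm_bounded hFsum
    intro k
    exact le_trans (abs_le_mnorm _ i j) (hmF k)
  have habs : ∀ i j : Fin 2, Summable (fun k : ℤ => ‖(A s k * B k s') i j‖) := by
    intro i j
    apply Summable.of_nonneg_of_le (fun k => norm_nonneg _) _ hFsum
    intro k
    exact le_trans (abs_le_mnorm _ i j) (hmF k)
  have hsum : Summable (fun k : ℤ => A s k * B k s') := by
    apply Pi.summable.mpr
    intro i
    apply Pi.summable.mpr
    intro j
    exact hent i j
  refine ⟨hsum, ?_⟩
  -- value of tsum of F
  have hT1 : ∑' k : ℤ, gZ (k - s) = S := (Equiv.subRight s).tsum_eq gZ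
  have hT2 : ∑' k : ℤ, gZ (k + s) = S := (Equiv.addRight s).tsum_eq gZ
  have htsumF : ∑' k : ℤ, F k = 2 * (2 + 2 ^ αe) * S * nA * nB := by
    simp only [hF]
    rw [tsum_mul_left, Summable.tsum_add (hg1.add hg2) (hg.mul_left _), Summable.tsum_add hg1 hg2,
      tsum_mul_left, hT1, hT2, ← hS]
    ring
  -- entries of the tsum
  have happly : ∀ i j : Fin 2,
      (∑' k : ℤ, A s k * B k s') i j = ∑' k : ℤ, (A s k * B k s') i j := by
    intro i j
    exact (congrFun (tsum_apply (f := fun k : ℤ => (A s k * B k s' : Fin 2 → Fin 2 → ℂ)) hsum) j).trans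
      (tsum_apply (Pi.summable.mp hsum i))
  have hmain : mnorm (∑' k : ℤ, A s k * B k s') ≤ (∑' k : ℤ, F k) / (a ^ β * c ^ β) := by
    apply mnorm_le
    intro i j
    rw [happly i j]
    have h1 : ‖∑' k : ℤ, (A s k * B k s') i j‖
        ≤ ∑' k : ℤ, ‖(A s k * B k s') i j‖ := by
      have := norm_tsum_le_tsum_norm (f := fun k : ℤ => (A s k * B k s') i j)
        (by simpa using habs i j)
      simpa using this
    refine h1.trans ?_
    have h2 : ∑' k : ℤ, ‖(A s k * B k s') i j‖
        ≤ ∑' k : ℤ, F k / (a ^ β * c ^ β) := by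
      apply Summable.tsum_le_tsum _ (habs i j) (hFsum.div_const _)
      intro k
      rw [le_div_iff₀ hac0]
      calc ‖(A s k * B k s') i j‖ * (a ^ β * c ^ β)
          ≤ mnorm (A s k * B k s') * (a ^ β * c ^ β) :=
            mul_le_mul_of_nonneg_right (abs_le_mnorm _ i j) hac0.le
        _ = a ^ β * c ^ β * mnorm (A s k * B k s') := by ring
        _ ≤ F k := hkey k
    refine h2.trans ?_
    rw [tsum_div_const]
  calc a ^ β * c ^ β * mnorm (∑' k : ℤ, A s k * B k s')
      ≤ a ^ β * c ^ β * ((∑' k : ℤ, F k) / (a ^ β * c ^ β)) :=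
        mul_le_mul_of_nonneg_left hmain hac0.le
    _ = ∑' k : ℤ, F k := by field_simp
    _ = 2 * (2 + 2 ^ αe) * S * nA * nB := htsumF
end

section
/- Let 0 < σ' < σ ≤ 1, κ > 0, n ≥ 1, and let ω ∈ ℝ^n satisfy |k·ω| ≥ κ for all k ∈ ℤ^n with 0 < |k| ≤ N. Let ψ : 𝕋^n_σ → ℂ be holomorphic and bounded with zero mean (ψ̂(0) = 0), and define φ(θ) = ∑_{0<|k|≤N} (−i ψ̂(k)/(k·ω)) e^{ik·θ}. Then sup_{|Im θ|<σ'} |φ(θ)| ≤ C / (κ (σ−σ')^n) · sup_{|Im θ|<σ} |ψ(θ)|, with C depending only on n. -/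
open MeasureTheory Finset

/-- The `k`-th Fourier coefficient of a `2π`-periodic function, computed over `[0,2π]^n`. -/
noncomputable def fourierCoeff' (n : ℕ) (ψ : (Fin n → ℂ) → ℂ) (k : Fin n → ℤ) : ℂ :=
  (((2 * Real.pi) ^ n : ℝ))⁻¹ •
    ∫ θ : Fin n → ℝ in Set.univ.pi fun _ : Fin n => Set.Icc (0 : ℝ) (2 * Real.pi),
      ψ (fun i => (θ i : ℂ)) * Complex.exp (-Complex.I * ∑ i, (k i : ℂ) * (θ i : ℂ))

noncomputable def Box (n : ℕ) : Set (Fin n → ℝ) := Set.univ.pi fun _ => Set.Icc (0:ℝ) (2*Real.pi)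

lemma shift1d (f : ℂ → ℂ) (σ c : ℝ) (hc : |c| < σ)
    (hd : DifferentiableOn ℂ f {z : ℂ | |z.im| < σ})
    (hp : ∀ z, f (z + 2 * Real.pi) = f z) :
    ∫ x in (0:ℝ)..(2 * Real.pi), f (x + c * Complex.I) = ∫ x in (0:ℝ)..(2 * Real.pi), f x := by
  have hσ : 0 < σ := lt_of_le_of_lt (abs_nonneg c) hc
  have key := Complex.integral_boundary_rect_eq_zero_of_differentiableOn f 0
    (⟨2 * Real.pi, c⟩ : ℂ) ?_
  · have hre : (⟨2 * Real.pi, c⟩ : ℂ).re = 2 * Real.pi := rfl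
    have him : (⟨2 * Real.pi, c⟩ : ℂ).im = c := rfl
    rw [hre, him] at key
    simp only [Complex.zero_re, Complex.zero_im, Complex.ofReal_zero, zero_mul, add_zero,
      smul_eq_mul] at key
    have : (∫ y : ℝ in (0:ℝ)..c, f (↑(2 * Real.pi) + ↑y * Complex.I))
        = ∫ y : ℝ in (0:ℝ)..c, f (0 + ↑y * Complex.I) := by
      refine intervalIntegral.integral_congr fun y _ => ?_
      rw [← hp (0 + ↑y * Complex.I)]
      push_cast
      ring_nf
    rw [this] at key
    linear_combination -key
  · refine hd.mono fun z hz => ?_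
    have h2 : z.im ∈ Set.uIcc (0:ℝ) c := hz.2
    have hle : |z.im| ≤ |c| := by
      rcases Set.mem_uIcc.mp h2 with h | h
      · rw [_root_.abs_of_nonneg h.1]; exact h.2.trans (le_abs_self c)
      · rw [_root_.abs_of_nonpos h.2]; exact (neg_le_neg h.1).trans (neg_le_abs c)
    exact lt_of_le_of_lt hle hc

lemma shift_one (m : ℕ) (g : (Fin (m+1) → ℂ) → ℂ) (σ s : ℝ) (hs0 : 0 ≤ s) (hsσ : s < σ)
    (hd : DifferentiableOn ℂ g {z : Fin (m+1) → ℂ | ∀ i, |(z i).im| < σ})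
    (hper : ∀ (z : Fin (m+1) → ℂ) (k : Fin (m+1) → ℤ),
      g (fun i => z i + 2 * Real.pi * (k i : ℂ)) = g z)
    (η : Fin (m+1) → ℝ) (hη : ∀ i, |η i| ≤ s) (j : Fin (m+1)) :
    ∫ θ in Box (m+1), g (fun i => (θ i : ℂ) + η i * Complex.I)
      = ∫ θ in Box (m+1), g (fun i => (θ i : ℂ) + (Function.update η j 0) i * Complex.I) := by
  have hπ : (0:ℝ) ≤ 2 * Real.pi := by positivity
  set e := MeasurableEquiv.piFinSuccAbove (fun _ : Fin (m+1) => ℝ) j with he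
  have hesymm : ∀ p : ℝ × (Fin m → ℝ), ⇑e.symm p = j.insertNth p.1 p.2 := by
    intro p; rw [MeasurableEquiv.piFinSuccAbove_symm_apply]; rfl
  have hmp : MeasurePreserving (⇑e.symm) (volume.prod volume)
      (volume : Measure (Fin (m+1) → ℝ)) := by
    rw [← Measure.volume_eq_prod]
    exact MeasurePreserving.symm e (volume_preserving_piFinSuccAbove (fun _ : Fin (m+1) => ℝ) j)
  have hpre : ⇑e.symm ⁻¹' (Box (m+1)) = (Set.Icc (0:ℝ) (2*Real.pi)) ×ˢ (Box m) := by
    ext p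
    simp only [Set.mem_preimage, hesymm, Box, Set.mem_pi, Set.mem_univ, forall_true_left,
      Set.mem_prod, true_implies]
    rw [Fin.forall_iff_succAbove j]
    simp [Fin.insertNth_apply_same, Fin.insertNth_apply_succAbove]
  -- main reduction to double integral, for a general shift c at coordinate j
  have main : ∀ c : ℝ, |c| ≤ s →
      (∫ θ in Box (m+1), g (fun i => (θ i : ℂ) + (Function.update η j c) i * Complex.I))
      = ∫ y in Box m, ∫ x in Set.Icc (0:ℝ) (2*Real.pi),
          g (fun i => ((j.insertNth x y : Fin (m+1) → ℝ) i : ℂ)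
            + (Function.update η j c) i * Complex.I) := by
    intro c hc
    set F : ℝ × (Fin m → ℝ) → ℂ := fun p =>
      g (fun i => ((j.insertNth p.1 p.2 : Fin (m+1) → ℝ) i : ℂ)
        + (Function.update η j c) i * Complex.I) with hF
    have hcont : ContinuousOn F ((Set.Icc (0:ℝ) (2*Real.pi)) ×ˢ (Box m)) := by
      have hTcont : Continuous (fun p : ℝ × (Fin m → ℝ) =>
          (fun i => ((j.insertNth p.1 p.2 : Fin (m+1) → ℝ) i : ℂ)
            + (Function.update η j c) i * Complex.I)) := by
        refine continuous_pi fun i => Continuous.add ?_ continuous_const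
        refine Complex.continuous_ofReal.comp ?_
        rcases eq_or_ne i j with rfl | hij
        · simpa only [Fin.insertNth_apply_same] using continuous_fst
        · obtain ⟨l, rfl⟩ := Fin.exists_succAbove_eq hij
          simp only [Fin.insertNth_apply_succAbove]; exact (continuous_apply l).comp continuous_snd
      have hmaps : ∀ p : ℝ × (Fin m → ℝ),
          (fun i => ((j.insertNth p.1 p.2 : Fin (m+1) → ℝ) i : ℂ)
            + (Function.update η j c) i * Complex.I) ∈ {z : Fin (m+1) → ℂ | ∀ i, |(z i).im| < σ} := by
        intro p i
        have him : (((j.insertNth p.1 p.2 : Fin (m+1) → ℝ) i : ℂ)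
            + (Function.update η j c) i * Complex.I).im = (Function.update η j c) i := by
          simp
        rw [him]
        rcases eq_or_ne i j with rfl | hij
        · rw [Function.update_self]; exact lt_of_le_of_lt hc hsσ
        · rw [Function.update_of_ne hij]; exact lt_of_le_of_lt (hη i) hsσ
      exact (hd.continuousOn.comp hTcont.continuousOn (fun p _ => hmaps p))
    have hK : IsCompact ((Set.Icc (0:ℝ) (2*Real.pi)) ×ˢ (Box m)) :=
      (isCompact_Icc).prod (isCompact_univ_pi fun _ => isCompact_Icc)
    have hInt : IntegrableOn F ((Set.Icc (0:ℝ) (2*Real.pi)) ×ˢ (Box m)) (volume.prod volume) := by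
      rw [← Measure.volume_eq_prod]
      exact hcont.integrableOn_compact hK
    have hcomp : ∀ p : ℝ × (Fin m → ℝ),
        g (fun i => ((e.symm p) i : ℂ) + (Function.update η j c) i * Complex.I) = F p := by
      intro p; rw [hesymm]
    calc ∫ θ in Box (m+1), g (fun i => (θ i : ℂ) + (Function.update η j c) i * Complex.I)
        = ∫ p in ⇑e.symm ⁻¹' (Box (m+1)),
            g (fun i => ((e.symm p) i : ℂ) + (Function.update η j c) i * Complex.I)
            ∂(volume.prod volume) := by
          rw [hmp.setIntegral_preimage_emb e.symm.measurableEmbedding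
            (fun θ => g (fun i => ((θ i : ℝ) : ℂ) + (Function.update η j c) i * Complex.I))
            (Box (m+1))]
      _ = ∫ p in (Set.Icc (0:ℝ) (2*Real.pi)) ×ˢ (Box m), F p ∂(volume.prod volume) := by
          rw [hpre]
          refine setIntegral_congr_fun ?_ fun p _ => hcomp p
          exact (measurableSet_Icc).prod (MeasurableSet.univ_pi fun _ => measurableSet_Icc)
      _ = ∫ x in Set.Icc (0:ℝ) (2*Real.pi), ∫ y in Box m, F (x, y) := by
          exact setIntegral_prod F hInt
      _ = ∫ y in Box m, ∫ x in Set.Icc (0:ℝ) (2*Real.pi), F (x, y) := by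
          refine integral_integral_swap ?_
          rw [Function.uncurry_def]
          rw [Measure.prod_restrict]
          exact hInt
  have hηs : |η j| ≤ s := hη j
  have h0s : |(0:ℝ)| ≤ s := by simpa using hs0
  conv_lhs => rw [← Function.update_eq_self j η]
  rw [main (η j) hηs, main 0 h0s]
  refine integral_congr_ae (Filter.Eventually.of_forall fun y => ?_)
  set ys : (l : Fin m) → ℂ := fun l => ((y l : ℝ) : ℂ) + η (j.succAbove l) * Complex.I with hys
  set f : ℂ → ℂ := fun w => g (j.insertNth w ys) with hf
  have harg : ∀ (x : ℝ) (cc : ℝ),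
      (fun i => ((j.insertNth x y : Fin (m+1) → ℝ) i : ℂ)
        + (Function.update η j cc) i * Complex.I)
      = j.insertNth ((x:ℂ) + cc * Complex.I) ys := by
    intro x cc; funext i
    rcases eq_or_ne i j with rfl | hij
    · simp [Fin.insertNth_apply_same]
    · obtain ⟨l, rfl⟩ := Fin.exists_succAbove_eq hij
      simp [hys, Fin.insertNth_apply_succAbove, Function.update_of_ne hij]
  have e1 : ∀ x : ℝ, g (fun i => ((j.insertNth x y : Fin (m+1) → ℝ) i : ℂ)
      + (Function.update η j (η j)) i * Complex.I) = f ((x:ℂ) + (η j) * Complex.I) := by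
    intro x; rw [harg x (η j)]
  have e0 : ∀ x : ℝ, g (fun i => ((j.insertNth x y : Fin (m+1) → ℝ) i : ℂ)
      + (Function.update η j 0) i * Complex.I) = f (x:ℂ) := by
    intro x; rw [harg x 0]; norm_num; rfl
  have hA : Differentiable ℂ (fun w : ℂ => (j.insertNth w ys : Fin (m+1) → ℂ)) := by
    rw [differentiable_pi]
    intro i
    rcases eq_or_ne i j with rfl | hij
    · simp only [Fin.insertNth_apply_same]; exact differentiable_id
    · obtain ⟨l, rfl⟩ := Fin.exists_succAbove_eq hij
      simp only [Fin.insertNth_apply_succAbove]; exact differentiable_const _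
  have hfd : DifferentiableOn ℂ f {z : ℂ | |z.im| < σ} := by
    refine hd.comp hA.differentiableOn fun w hw => ?_
    intro i
    rcases eq_or_ne i j with rfl | hij
    · simpa [Fin.insertNth_apply_same] using hw
    · obtain ⟨l, rfl⟩ := Fin.exists_succAbove_eq hij
      simp only [Fin.insertNth_apply_succAbove, hys]
      have : (((y l : ℝ) : ℂ) + η (j.succAbove l) * Complex.I).im = η (j.succAbove l) := by simp
      rw [this]
      exact lt_of_le_of_lt (hη _) hsσ
  have hfp : ∀ z, f (z + 2 * Real.pi) = f z := by
    intro w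
    have hins : j.insertNth (w + 2 * Real.pi) ys
        = fun i => (j.insertNth w ys : Fin (m+1) → ℂ) i
          + 2 * Real.pi * (((Pi.single j (1:ℤ) : Fin (m+1) → ℤ) i : ℤ) : ℂ) := by
      funext i
      rcases eq_or_ne i j with rfl | hij
      · simp [Fin.insertNth_apply_same]
      · obtain ⟨l, rfl⟩ := Fin.exists_succAbove_eq hij
        simp [Fin.insertNth_apply_succAbove, Pi.single_eq_of_ne hij]
    rw [hf]
    simp only [hins]
    exact hper _ _
  have hshift := shift1d f σ (η j) (lt_of_le_of_lt hηs hsσ) hfd hfp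
  simp_rw [e1, e0]
  rw [integral_Icc_eq_integral_Ioc, integral_Icc_eq_integral_Ioc,
    ← intervalIntegral.integral_of_le hπ, ← intervalIntegral.integral_of_le hπ]
  exact hshift

lemma shift_all (m : ℕ) (g : (Fin (m+1) → ℂ) → ℂ) (σ s : ℝ) (hs0 : 0 ≤ s) (hsσ : s < σ)
    (hd : DifferentiableOn ℂ g {z : Fin (m+1) → ℂ | ∀ i, |(z i).im| < σ})
    (hper : ∀ (z : Fin (m+1) → ℂ) (k : Fin (m+1) → ℤ),
      g (fun i => z i + 2 * Real.pi * (k i : ℂ)) = g z)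
    (η : Fin (m+1) → ℝ) (hη : ∀ i, |η i| ≤ s) :
    ∫ θ in Box (m+1), g (fun i => (θ i : ℂ) + η i * Complex.I)
      = ∫ θ in Box (m+1), g (fun i => (θ i : ℂ)) := by
  suffices H : ∀ (t : Finset (Fin (m+1))) (η : Fin (m+1) → ℝ), (∀ i, |η i| ≤ s) →
      (∀ i ∉ t, η i = 0) →
      ∫ θ in Box (m+1), g (fun i => (θ i : ℂ) + η i * Complex.I)
        = ∫ θ in Box (m+1), g (fun i => (θ i : ℂ)) by
    exact H Finset.univ η hη (fun i hi => absurd (Finset.mem_univ i) hi)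
  intro t
  induction t using Finset.induction_on with
  | empty =>
    intro η hη h0
    have : ∀ i, η i = 0 := fun i => h0 i (Finset.notMem_empty i)
    refine setIntegral_congr_fun ?_ fun θ _ => ?_
    · exact MeasurableSet.univ_pi fun _ => measurableSet_Icc
    · congr 1; funext i; rw [this i]; simp
  | @insert j t hj ih =>
    intro η hη h0
    rw [shift_one m g σ s hs0 hsσ hd hper η hη j]
    refine ih (Function.update η j 0) (fun i => ?_) (fun i hi => ?_)
    · rcases eq_or_ne i j with rfl | hij
      · rw [Function.update_self]; simpa using hs0
      · rw [Function.update_of_ne hij]; exact hη i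
    · rcases eq_or_ne i j with rfl | hij
      · rw [Function.update_self]
      · rw [Function.update_of_ne hij]
        exact h0 i (by simp [Finset.mem_insert, hij] at hi ⊢; exact hi)

lemma coeff_decay (m : ℕ) (σ s M : ℝ) (hs0 : 0 ≤ s) (hsσ : s < σ)
    (ψ : (Fin (m+1) → ℂ) → ℂ)
    (hper : ∀ (θ : Fin (m+1) → ℂ) (k : Fin (m+1) → ℤ),
      ψ (fun i => θ i + 2 * Real.pi * (k i : ℂ)) = ψ θ)
    (hd : DifferentiableOn ℂ ψ {θ : Fin (m+1) → ℂ | ∀ i, |(θ i).im| < σ})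
    (hM : ∀ θ : Fin (m+1) → ℂ, (∀ i, |(θ i).im| < σ) → ‖ψ θ‖ ≤ M)
    (k : Fin (m+1) → ℤ) :
    ‖fourierCoeff' (m+1) ψ k‖ ≤ M * Real.exp (-s * ((∑ i, |k i| : ℤ) : ℝ)) := by
  have hπ : (0:ℝ) < 2 * Real.pi := by positivity
  set g : (Fin (m+1) → ℂ) → ℂ :=
    fun z => ψ z * Complex.exp (-Complex.I * ∑ i, (k i : ℂ) * z i) with hg
  set η : Fin (m+1) → ℝ := fun i => if 0 ≤ k i then -s else s with hη
  have hηb : ∀ i, |η i| ≤ s := by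
    intro i
    by_cases h : 0 ≤ k i <;>
      simp [hη, h, abs_neg, _root_.abs_of_nonneg hs0]
  have hkη : ∀ i, (k i : ℝ) * η i = -s * ((|k i| : ℤ) : ℝ) := by
    intro i
    by_cases h : 0 ≤ k i
    · simp only [hη, if_pos h]
      rw [_root_.abs_of_nonneg h]; push_cast; ring
    · push_neg at h
      simp only [hη, if_neg (not_le.mpr h)]
      rw [_root_.abs_of_neg h]; push_cast; ring
  -- differentiability of g
  have hexp : Differentiable ℂ fun z : Fin (m+1) → ℂ =>
      Complex.exp (-Complex.I * ∑ i, (k i : ℂ) * z i) := by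
    refine Differentiable.cexp ?_
    refine (differentiable_const _).mul ?_
    refine Differentiable.fun_sum fun i _ => (differentiable_const _).mul ?_
    exact (ContinuousLinearMap.proj i : (Fin (m+1) → ℂ) →L[ℂ] ℂ).differentiable
  have hgd : DifferentiableOn ℂ g {z : Fin (m+1) → ℂ | ∀ i, |(z i).im| < σ} :=
    hd.mul hexp.differentiableOn
  -- periodicity of g
  have hgper : ∀ (z : Fin (m+1) → ℂ) (k' : Fin (m+1) → ℤ),
      g (fun i => z i + 2 * Real.pi * (k' i : ℂ)) = g z := by
    intro z k'
    rw [hg]; dsimp only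
    rw [hper z k']
    congr 1
    have h1 : (∑ i, (k i : ℂ) * (z i + 2 * Real.pi * (k' i : ℂ)))
        = (∑ i, (k i : ℂ) * z i) + ((∑ i, k i * k' i : ℤ) : ℂ) * (2 * Real.pi) := by
      push_cast
      rw [Finset.sum_mul]
      rw [← Finset.sum_add_distrib]
      congr 1; funext i; ring
    rw [h1]
    have h2 : -Complex.I * ((∑ i, (k i : ℂ) * z i) + ((∑ i, k i * k' i : ℤ) : ℂ) * (2 * Real.pi))
        = -Complex.I * (∑ i, (k i : ℂ) * z i)
          + ((-(∑ i, k i * k' i) : ℤ) : ℂ) * (2 * Real.pi * Complex.I) := by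
      push_cast; ring
    rw [h2, Complex.exp_add, Complex.exp_int_mul_two_pi_mul_I, mul_one]
  -- rewrite coefficient via shifted integral
  have hcoeff : fourierCoeff' (m+1) ψ k
      = (((2 * Real.pi) ^ (m+1) : ℝ))⁻¹ •
        ∫ θ in Box (m+1), g (fun i => (θ i : ℂ) + η i * Complex.I) := by
    rw [shift_all m g σ s hs0 hsσ hgd hgper η hηb]
    rfl
  -- pointwise bound on the shifted integrand
  have hbound : ∀ θ : Fin (m+1) → ℝ,
      ‖g (fun i => (θ i : ℂ) + η i * Complex.I)‖
        ≤ M * Real.exp (-s * ((∑ i, |k i| : ℤ) : ℝ)) := by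
    intro θ
    rw [hg]; dsimp only
    rw [norm_mul]
    have hψ : ‖ψ (fun i => (θ i : ℂ) + η i * Complex.I)‖ ≤ M := by
      refine hM _ fun i => ?_
      have : (((θ i : ℝ) : ℂ) + η i * Complex.I).im = η i := by simp
      rw [this]; exact lt_of_le_of_lt (hηb i) hsσ
    have hexpval : ‖Complex.exp (-Complex.I * ∑ i, (k i : ℂ) * ((θ i : ℂ) + η i * Complex.I))‖
        = Real.exp (-s * ((∑ i, |k i| : ℤ) : ℝ)) := by
      rw [Complex.norm_exp]
      congr 1
      have him : (∑ i, (k i : ℂ) * ((θ i : ℂ) + η i * Complex.I)).im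
          = ∑ i, (k i : ℝ) * η i := by
        rw [Complex.im_sum]
        congr 1; funext i
        simp
      have : (-Complex.I * ∑ i, (k i : ℂ) * ((θ i : ℂ) + η i * Complex.I)).re
          = (∑ i, (k i : ℂ) * ((θ i : ℂ) + η i * Complex.I)).im := by
        simp
      rw [this, him]
      rw [show (∑ i, (k i : ℝ) * η i) = ∑ i, -s * ((|k i| : ℤ) : ℝ) by
        congr 1; funext i; exact hkη i]
      rw [← Finset.mul_sum]
      congr 1
      push_cast
      ring
    rw [hexpval]
    have : (0:ℝ) ≤ Real.exp (-s * ((∑ i, |k i| : ℤ) : ℝ)) := (Real.exp_pos _).le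
    exact mul_le_mul_of_nonneg_right hψ this
  set C := M * Real.exp (-s * ((∑ i, |k i| : ℤ) : ℝ)) with hC
  have hgc : Continuous (fun θ : Fin (m+1) → ℝ =>
      g (fun i => (θ i : ℂ) + η i * Complex.I)) := by
    have hT : Continuous (fun θ : Fin (m+1) → ℝ =>
        (fun i => ((θ i : ℝ) : ℂ) + η i * Complex.I)) :=
      continuous_pi fun i =>
        (Complex.continuous_ofReal.comp (continuous_apply i)).add continuous_const
    refine hgd.continuousOn.comp_continuous hT fun θ => ?_
    intro i
    have : (((θ i : ℝ) : ℂ) + η i * Complex.I).im = η i := by simp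
    rw [this]; exact lt_of_le_of_lt (hηb i) hsσ
  have hK : IsCompact (Box (m+1)) := isCompact_univ_pi fun _ => isCompact_Icc
  have hμ : volume (Box (m+1)) < ⊤ := hK.measure_lt_top
  have hnorm := norm_setIntegral_le_of_norm_le_const (μ := volume) hμ
    (fun θ _ => hbound θ)
  have hvol : (volume (Box (m+1))).toReal = (2*Real.pi)^(m+1) := by
    rw [Box, volume_pi_pi]
    simp only [Real.volume_Icc, sub_zero, Finset.prod_const, Finset.card_univ,
      Fintype.card_fin]
    rw [ENNReal.toReal_pow, ENNReal.toReal_ofReal hπ.le]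
  rw [measureReal_def, hvol] at hnorm
  rw [hcoeff, norm_smul, Real.norm_eq_abs,
    _root_.abs_of_pos (by positivity : (0:ℝ) < ((2*Real.pi)^(m+1))⁻¹)]
  calc ((2*Real.pi)^(m+1))⁻¹ * ‖∫ θ in Box (m+1), g (fun i => (θ i : ℂ) + η i * Complex.I)‖
      ≤ ((2*Real.pi)^(m+1))⁻¹ * (C * (2*Real.pi)^(m+1)) :=
        mul_le_mul_of_nonneg_left hnorm (by positivity)
    _ = C := by field_simp

lemma geo_sum (δ : ℝ) (hδ0 : 0 < δ) (hδ1 : δ ≤ 1) (N : ℕ) :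
    ∑ m ∈ Finset.Icc (-(N:ℤ)) (N:ℤ), Real.exp (-δ * ((|m| : ℤ) : ℝ)) ≤ 6 / δ := by
  set r := Real.exp (-δ) with hr
  have hr0 : 0 ≤ r := (Real.exp_pos _).le
  have hr1 : r < 1 := by
    rw [hr, Real.exp_lt_one_iff]; linarith
  have hterm : ∀ m : ℤ, Real.exp (-δ * ((|m| : ℤ) : ℝ)) = r ^ m.natAbs := by
    intro m
    rw [hr, ← Real.exp_nat_mul]
    congr 1
    rw [Nat.cast_natAbs]
    push_cast
    ring
  have hgeom : ∀ n : ℕ, ∑ j ∈ Finset.range n, r ^ j ≤ (1 - r)⁻¹ := by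
    intro n
    refine Summable.sum_le_tsum _ (fun j _ => pow_nonneg hr0 j) ?_ |>.trans_eq
      (tsum_geometric_of_lt_one hr0 hr1)
    exact summable_geometric_of_lt_one hr0 hr1
  have hinv : (1 - r)⁻¹ ≤ 2 / δ := by
    have h1 : 1 + δ ≤ Real.exp δ := by
      have := Real.add_one_le_exp δ; linarith
    have h2 : r ≤ (1 + δ)⁻¹ := by
      rw [hr, Real.exp_neg]
      exact inv_anti₀ (by linarith) h1
    have h3 : δ / 2 ≤ 1 - r := by
      have : (1:ℝ) + δ ≤ 2 := by linarith
      have h4 : (1 + δ)⁻¹ ≤ 1 - δ/2 := by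
        rw [inv_le_iff_one_le_mul₀ (by linarith)]
        nlinarith
      linarith
    calc (1 - r)⁻¹ ≤ (δ/2)⁻¹ := inv_anti₀ (by positivity) h3
      _ = 2 / δ := by rw [inv_div]
  -- positive part
  have hpos : ∑ x ∈ Finset.Icc (1:ℤ) (N:ℤ), r ^ x.natAbs ≤ (1 - r)⁻¹ := by
    have : ∑ x ∈ Finset.Icc (1:ℤ) (N:ℤ), r ^ x.natAbs
        = ∑ j ∈ Finset.range N, r ^ (j+1) := by
      refine Finset.sum_nbij' (fun x => (x-1).toNat) (fun j => (j:ℤ)+1) ?_ ?_ ?_ ?_ ?_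
      · intro x hx; simp only [Finset.mem_Icc] at hx; simp only [Finset.mem_range]; omega
      · intro j hj; simp only [Finset.mem_range] at hj; simp only [Finset.mem_Icc]; omega
      · intro x hx; simp only [Finset.mem_Icc] at hx; beta_reduce; omega
      · intro j hj; simp only [Finset.mem_range] at hj; beta_reduce; omega
      · intro x hx; simp only [Finset.mem_Icc] at hx
        beta_reduce; congr 1; omega
    rw [this]
    calc ∑ j ∈ Finset.range N, r ^ (j+1) ≤ ∑ j ∈ Finset.range N, r ^ j := by
          refine Finset.sum_le_sum fun j _ => ?_
          exact pow_le_pow_of_le_one hr0 hr1.le (by omega)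
      _ ≤ (1 - r)⁻¹ := hgeom N
  have hneg : ∑ x ∈ Finset.Icc (-(N:ℤ)) (-1:ℤ), r ^ x.natAbs ≤ (1 - r)⁻¹ := by
    have : ∑ x ∈ Finset.Icc (-(N:ℤ)) (-1:ℤ), r ^ x.natAbs
        = ∑ x ∈ Finset.Icc (1:ℤ) (N:ℤ), r ^ x.natAbs := by
      refine Finset.sum_nbij' (fun x => -x) (fun x => -x) ?_ ?_ ?_ ?_ ?_
      · intro x hx; simp only [Finset.mem_Icc] at hx ⊢; omega
      · intro x hx; simp only [Finset.mem_Icc] at hx ⊢; omega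
      · intro x _; beta_reduce; omega
      · intro x _; beta_reduce; omega
      · intro x _; beta_reduce; congr 1; omega
    rw [this]; exact hpos
  have hsplit : Finset.Icc (-(N:ℤ)) (N:ℤ)
      = (Finset.Icc (-(N:ℤ)) (-1:ℤ) ∪ Finset.Icc (1:ℤ) (N:ℤ)) ∪ {0} := by
    ext x
    simp only [Finset.mem_Icc, Finset.mem_union, Finset.mem_singleton]
    omega
  have hd1 : Disjoint (Finset.Icc (-(N:ℤ)) (-1:ℤ) ∪ Finset.Icc (1:ℤ) (N:ℤ)) ({0} : Finset ℤ) := by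
    simp only [Finset.disjoint_left, Finset.mem_union, Finset.mem_Icc, Finset.mem_singleton]
    intro x hx; omega
  have hd2 : Disjoint (Finset.Icc (-(N:ℤ)) (-1:ℤ)) (Finset.Icc (1:ℤ) (N:ℤ)) := by
    simp only [Finset.disjoint_left, Finset.mem_Icc]
    intro x hx; omega
  have hδ2 : (1:ℝ) ≤ 2 / δ := by
    rw [le_div_iff₀ hδ0]; linarith
  calc ∑ m ∈ Finset.Icc (-(N:ℤ)) (N:ℤ), Real.exp (-δ * ((|m| : ℤ) : ℝ))
      = ∑ m ∈ Finset.Icc (-(N:ℤ)) (N:ℤ), r ^ m.natAbs := by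
        exact Finset.sum_congr rfl fun m _ => hterm m
    _ = (∑ x ∈ Finset.Icc (-(N:ℤ)) (-1:ℤ), r ^ x.natAbs)
        + (∑ x ∈ Finset.Icc (1:ℤ) (N:ℤ), r ^ x.natAbs) + 1 := by
        rw [hsplit, Finset.sum_union hd1, Finset.sum_union hd2]
        simp
    _ ≤ (1-r)⁻¹ + (1-r)⁻¹ + 1 := by gcongr
    _ ≤ 2/δ + 2/δ + 2/δ := by gcongr <;> linarith [hinv, hδ2]
    _ = 6 / δ := by ring

set_option maxHeartbeats 1000000 in
/-- Lemma 4.4 (first estimate): if `|k·ω| ≥ κ` for `0 < |k|₁ ≤ N` and `ψ` is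
`2π`-periodic, holomorphic and bounded by `M` on the strip `{|Im θ| < σ}` with zero
mean, then the truncated solution
`φ(θ) = ∑_{0<|k|₁≤N} (-i ψ̂(k)/(k·ω)) e^{ik·θ}` of `∇φ·ω = ψ + R` satisfies
`sup_{|Im θ|<σ'} |φ| ≤ C κ⁻¹ (σ-σ')⁻ⁿ sup_{|Im θ|<σ} |ψ|`, `C` depending only on `n`. -/
theorem stmt_12 (n : ℕ) (hn : 1 ≤ n) :
    ∃ C > 0, ∀ (σ σ' κ : ℝ) (N : ℕ) (ω : Fin n → ℝ) (ψ : (Fin n → ℂ) → ℂ) (M : ℝ),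
      0 < σ' → σ' < σ → σ ≤ 1 → 0 < κ → 1 ≤ N →
      (∀ k : Fin n → ℤ, k ≠ 0 → ∑ i, |k i| ≤ (N : ℤ) →
        κ ≤ |∑ i, (k i : ℝ) * ω i|) →
      (∀ (θ : Fin n → ℂ) (k : Fin n → ℤ),
        ψ (fun i => θ i + 2 * Real.pi * (k i : ℂ)) = ψ θ) →
      DifferentiableOn ℂ ψ {θ : Fin n → ℂ | ∀ i, |(θ i).im| < σ} →
      (∀ θ : Fin n → ℂ, (∀ i, |(θ i).im| < σ) → ‖ψ θ‖ ≤ M) →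
      fourierCoeff' n ψ 0 = 0 →
      ∀ θ : Fin n → ℂ, (∀ i, |(θ i).im| < σ') →
        ‖∑ k ∈ (Finset.Icc (fun _ : Fin n => -(N : ℤ)) (fun _ : Fin n => (N : ℤ))).filter
              (fun k => 0 < ∑ i, |k i| ∧ ∑ i, |k i| ≤ (N : ℤ)),
            (-Complex.I * fourierCoeff' n ψ k / ((∑ i, (k i : ℝ) * ω i : ℝ) : ℂ)) *
              Complex.exp (Complex.I * ∑ i, (k i : ℂ) * θ i)‖
          ≤ C / (κ * (σ - σ') ^ n) * M := by
  obtain ⟨m, rfl⟩ : ∃ m, n = m + 1 := ⟨n - 1, by omega⟩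
  refine ⟨(12:ℝ)^(m+1), by positivity, ?_⟩
  intro σ σ' κ N ω ψ M hσ'0 hσ'σ hσ1 hκ hN hdio hper hd hM hmean θ hθ
  set δ : ℝ := (σ - σ') / 2 with hδdef
  have hδ0 : 0 < δ := by rw [hδdef]; linarith
  have hδ1 : δ ≤ 1 := by rw [hδdef]; linarith
  set s : ℝ := (σ + σ') / 2 with hsdef
  have hs0 : 0 ≤ s := by rw [hsdef]; linarith
  have hsσ : s < σ := by rw [hsdef]; linarith
  have hM0 : 0 ≤ M := by
    refine le_trans (norm_nonneg (ψ fun _ => 0)) (hM _ fun i => ?_)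
    simpa using lt_trans hσ'0 hσ'σ
  have hterm : ∀ k ∈ (Finset.Icc (fun _ : Fin (m+1) => -(N : ℤ))
        (fun _ : Fin (m+1) => (N : ℤ))).filter
        (fun k => 0 < ∑ i, |k i| ∧ ∑ i, |k i| ≤ (N : ℤ)),
      ‖(-Complex.I * fourierCoeff' (m+1) ψ k / ((∑ i, (k i : ℝ) * ω i : ℝ) : ℂ)) *
          Complex.exp (Complex.I * ∑ i, (k i : ℂ) * θ i)‖
        ≤ M / κ * Real.exp (-δ * ((∑ i, |k i| : ℤ) : ℝ)) := by
    intro k hk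
    rw [Finset.mem_filter] at hk
    obtain ⟨-, hk0, hkN⟩ := hk
    have hkne : k ≠ 0 := by
      intro h; rw [h] at hk0; simp at hk0
    have hκd : κ ≤ |∑ i, (k i : ℝ) * ω i| := hdio k hkne hkN
    have hcoeff := coeff_decay m σ s M hs0 hsσ ψ hper hd hM k
    have hexp : ‖Complex.exp (Complex.I * ∑ i, (k i : ℂ) * θ i)‖
        ≤ Real.exp (σ' * ((∑ i, |k i| : ℤ) : ℝ)) := by
      rw [Complex.norm_exp]
      refine Real.exp_le_exp.mpr ?_
      have hre : (Complex.I * ∑ i, (k i : ℂ) * θ i).re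
          = -(∑ i, (k i : ℂ) * θ i).im := by simp
      rw [hre, Complex.im_sum]
      have him : ∀ i : Fin (m+1), ((k i : ℂ) * θ i).im = (k i : ℝ) * (θ i).im := by
        intro i; simp
      calc -(∑ i, ((k i : ℂ) * θ i).im) = ∑ i, -((k i : ℝ) * (θ i).im) := by
            rw [← Finset.sum_neg_distrib]
            exact Finset.sum_congr rfl fun i _ => by rw [him i]
        _ ≤ ∑ i, ((|k i| : ℤ) : ℝ) * σ' := by
            refine Finset.sum_le_sum fun i _ => ?_
            have h1 : -((k i : ℝ) * (θ i).im) ≤ |(k i : ℝ)| * |(θ i).im| := by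
              rw [← abs_mul]; exact neg_le_abs _
            have h2 : |(k i : ℝ)| * |(θ i).im| ≤ |(k i : ℝ)| * σ' :=
              mul_le_mul_of_nonneg_left (hθ i).le (abs_nonneg _)
            have h3 : |(k i : ℝ)| = ((|k i| : ℤ) : ℝ) := by push_cast; ring
            rw [← h3]; exact le_trans h1 h2
        _ = σ' * ((∑ i, |k i| : ℤ) : ℝ) := by
            rw [← Finset.sum_mul]; push_cast; ring
    have hnorm : ‖-Complex.I * fourierCoeff' (m+1) ψ k / ((∑ i, (k i : ℝ) * ω i : ℝ) : ℂ)‖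
        = ‖fourierCoeff' (m+1) ψ k‖ / |∑ i, (k i : ℝ) * ω i| := by
      rw [norm_div, norm_mul, norm_neg, Complex.norm_I, one_mul, Complex.norm_real,
        Real.norm_eq_abs]
    rw [norm_mul, hnorm]
    have h1 : ‖fourierCoeff' (m+1) ψ k‖ / |∑ i, (k i : ℝ) * ω i|
        ≤ (M * Real.exp (-s * ((∑ i, |k i| : ℤ) : ℝ))) / κ :=
      div_le_div₀ (by positivity) hcoeff hκ hκd
    calc ‖fourierCoeff' (m+1) ψ k‖ / |∑ i, (k i : ℝ) * ω i|
          * ‖Complex.exp (Complex.I * ∑ i, (k i : ℂ) * θ i)‖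
        ≤ (M * Real.exp (-s * ((∑ i, |k i| : ℤ) : ℝ))) / κ
          * Real.exp (σ' * ((∑ i, |k i| : ℤ) : ℝ)) := by
          refine mul_le_mul h1 hexp (norm_nonneg _) ?_
          exact div_nonneg (by positivity) hκ.le
      _ = M / κ * Real.exp (-δ * ((∑ i, |k i| : ℤ) : ℝ)) := by
          have hee : Real.exp (-s * ((∑ i, |k i| : ℤ) : ℝ))
              * Real.exp (σ' * ((∑ i, |k i| : ℤ) : ℝ))
              = Real.exp (-δ * ((∑ i, |k i| : ℤ) : ℝ)) := by
            rw [← Real.exp_add]; congr 1; rw [hδdef, hsdef]; ring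
          rw [← hee]; ring
  refine le_trans (norm_sum_le _ _) ?_
  refine le_trans (Finset.sum_le_sum hterm) ?_
  rw [← Finset.mul_sum]
  have hsum : ∑ k ∈ (Finset.Icc (fun _ : Fin (m+1) => -(N : ℤ))
        (fun _ : Fin (m+1) => (N : ℤ))).filter
        (fun k => 0 < ∑ i, |k i| ∧ ∑ i, |k i| ≤ (N : ℤ)),
      Real.exp (-δ * ((∑ i, |k i| : ℤ) : ℝ)) ≤ (6/δ)^(m+1) := by
    refine le_trans (Finset.sum_le_sum_of_subset_of_nonneg (Finset.filter_subset _ _)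
      (fun k _ _ => (Real.exp_pos _).le)) ?_
    have hfac : ∀ k : Fin (m+1) → ℤ, Real.exp (-δ * ((∑ i, |k i| : ℤ) : ℝ))
        = ∏ i, Real.exp (-δ * ((|k i| : ℤ) : ℝ)) := by
      intro k
      rw [← Real.exp_sum]
      congr 1
      rw [← Finset.mul_sum]
      push_cast
      ring
    rw [Pi.Icc_eq]
    calc ∑ k ∈ Fintype.piFinset (fun _ : Fin (m+1) => Finset.Icc (-(N:ℤ)) (N:ℤ)),
          Real.exp (-δ * ((∑ i, |k i| : ℤ) : ℝ))
        = ∑ k ∈ Fintype.piFinset (fun _ : Fin (m+1) => Finset.Icc (-(N:ℤ)) (N:ℤ)),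
          ∏ i, Real.exp (-δ * ((|k i| : ℤ) : ℝ)) :=
          Finset.sum_congr rfl fun k _ => hfac k
      _ = ∏ _i : Fin (m+1), ∑ mm ∈ Finset.Icc (-(N:ℤ)) (N:ℤ),
            Real.exp (-δ * ((|mm| : ℤ) : ℝ)) :=
          (Finset.prod_univ_sum (fun _ : Fin (m+1) => Finset.Icc (-(N:ℤ)) (N:ℤ)) (fun _ mm => Real.exp (-δ * ((|mm| : ℤ) : ℝ)))).symm
      _ ≤ ∏ _i : Fin (m+1), (6/δ) := by
          refine Finset.prod_le_prod (fun i _ => ?_) (fun i _ => geo_sum δ hδ0 hδ1 N)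
          exact Finset.sum_nonneg fun mm _ => (Real.exp_pos _).le
      _ = (6/δ)^(m+1) := by
          rw [Finset.prod_const, Finset.card_univ, Fintype.card_fin]
  calc M / κ * ∑ k ∈ (Finset.Icc (fun _ : Fin (m+1) => -(N : ℤ))
        (fun _ : Fin (m+1) => (N : ℤ))).filter
        (fun k => 0 < ∑ i, |k i| ∧ ∑ i, |k i| ≤ (N : ℤ)),
      Real.exp (-δ * ((∑ i, |k i| : ℤ) : ℝ))
      ≤ M / κ * (6/δ)^(m+1) :=
        mul_le_mul_of_nonneg_left hsum (div_nonneg hM0 hκ.le)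
    _ = (12:ℝ)^(m+1) / (κ * (σ - σ') ^ (m+1)) * M := by
        rw [hδdef]
        have hne : σ - σ' ≠ 0 := by intro h; rw [hδdef] at hδ0; linarith [hδ0]
        field_simp
        have h1 : (σ - σ')⁻¹ ^ m * (σ - σ') ^ m = 1 := by
          rw [inv_pow, inv_mul_cancel₀ (pow_ne_zero _ hne)]
        have h2 : (σ - σ')⁻¹ * (σ - σ') = 1 := inv_mul_cancel₀ hne
        linear_combination (M * 12 ^ m * 12 * ((σ - σ')⁻¹ ^ m * (σ - σ') ^ m)) * h2 + (M * 12 ^ m * 12) * h1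
end

section
/- Let I = (−1,1), let A(t) = diag(a₁(t),…,a_N(t)) be a real diagonal N×N matrix with each a_j of class C¹ on I satisfying a_j'(t) ≥ δ for all t, and let B(t) be a Hermitian N×N matrix of class C¹ on I with ‖B'(t)‖ ≤ δ/2 in operator norm for all t. Then for every κ > 0, the Lebesgue measure of { t ∈ I : A(t)+B(t) is not invertible, or ‖(A(t)+B(t))^{-1}‖ > κ^{-1} } is at most 4 N κ / δ. -/
open MeasureTheory

/-- The `ℓ²` operator norm of a complex `N×N` matrix. -/
noncomputable def opN (N : ℕ) (M : Matrix (Fin N) (Fin N) ℂ) : ℝ :=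
  ‖(Matrix.toEuclideanCLM (𝕜 := ℂ) M :
      EuclideanSpace ℂ (Fin N) →L[ℂ] EuclideanSpace ℂ (Fin N))‖

open Matrix

variable {N : ℕ}

variable {N : ℕ}

noncomputable def TE (M : Matrix (Fin N) (Fin N) ℂ) :
    EuclideanSpace ℂ (Fin N) →L[ℂ] EuclideanSpace ℂ (Fin N) :=
  Matrix.toEuclideanCLM (𝕜 := ℂ) M

noncomputable def qf (M : Matrix (Fin N) (Fin N) ℂ) (x : EuclideanSpace ℂ (Fin N)) : ℝ :=
  Complex.re (inner ℂ x (TE M x))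

lemma TE_apply (M : Matrix (Fin N) (Fin N) ℂ) (x : EuclideanSpace ℂ (Fin N)) :
    TE M x = (WithLp.equiv 2 _).symm (M *ᵥ (WithLp.equiv 2 _ x)) := by
  apply (WithLp.equiv 2 _).injective
  simp [TE, Matrix.ofLp_toEuclideanCLM]

lemma TE_apply_eigen {M : Matrix (Fin N) (Fin N) ℂ} (hM : M.IsHermitian) (j : Fin N) :
    TE M (hM.eigenvectorBasis j) = hM.eigenvalues j • hM.eigenvectorBasis j := by
  rw [TE_apply]
  have : (WithLp.equiv 2 ((Fin N) → ℂ)) (hM.eigenvectorBasis j) = ⇑(hM.eigenvectorBasis j) := rfl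
  rw [this, hM.mulVec_eigenvectorBasis j]
  rfl

lemma TE_symm {M : Matrix (Fin N) (Fin N) ℂ} (hM : M.IsHermitian)
    (x y : EuclideanSpace ℂ (Fin N)) : inner ℂ (TE M x) y = (inner ℂ x (TE M y) : ℂ) := by
  have hsa : _root_.IsSelfAdjoint (TE M) := by
    rw [_root_.IsSelfAdjoint, TE, ← map_star (Matrix.toEuclideanCLM (𝕜 := ℂ))]
    exact congrArg _ hM
  exact (ContinuousLinearMap.isSelfAdjoint_iff_isSymmetric.mp hsa) x y

lemma repr_TE {M : Matrix (Fin N) (Fin N) ℂ} (hM : M.IsHermitian)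
    (x : EuclideanSpace ℂ (Fin N)) (j : Fin N) :
    hM.eigenvectorBasis.repr (TE M x) j
      = hM.eigenvalues j * hM.eigenvectorBasis.repr x j := by
  rw [OrthonormalBasis.repr_apply_apply, OrthonormalBasis.repr_apply_apply,
    ← TE_symm hM, TE_apply_eigen hM]
  have : hM.eigenvalues j • hM.eigenvectorBasis j
      = (hM.eigenvalues j : ℂ) • hM.eigenvectorBasis j :=
    RCLike.real_smul_eq_coe_smul (K := ℂ) _ _
  rw [this, inner_smul_left]
  simp

lemma normsq_eq_sum {b : OrthonormalBasis (Fin N) ℂ (EuclideanSpace ℂ (Fin N))}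
    (x : EuclideanSpace ℂ (Fin N)) : ‖x‖ ^ 2 = ∑ j, ‖b.repr x j‖ ^ 2 := by
  rw [← b.repr.norm_map x, EuclideanSpace.norm_eq, Real.sq_sqrt (by positivity)]

lemma qf_eq_sum {M : Matrix (Fin N) (Fin N) ℂ} (hM : M.IsHermitian)
    (x : EuclideanSpace ℂ (Fin N)) :
    qf M x = ∑ j, hM.eigenvalues j * ‖hM.eigenvectorBasis.repr x j‖ ^ 2 := by
  set b := hM.eigenvectorBasis
  have : (inner ℂ x (TE M x) : ℂ) = inner ℂ (b.repr x) (b.repr (TE M x)) :=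
    (b.repr.inner_map_map x (TE M x)).symm
  rw [qf, this, PiLp.inner_apply]
  rw [Complex.re_sum]
  apply Finset.sum_congr rfl
  intro j _
  rw [repr_TE hM, RCLike.inner_apply]
  have : (↑(hM.eigenvalues j) * hM.eigenvectorBasis.repr x j) * (starRingEnd ℂ) (b.repr x j)
      = (hM.eigenvalues j : ℂ) * ((starRingEnd ℂ) (b.repr x j) * b.repr x j) := by
    simp only [b]; ring
  rw [this, RCLike.conj_mul]
  simp [RCLike.ofReal_pow]
  left
  norm_cast

lemma normsq_TE_eq_sum {M : Matrix (Fin N) (Fin N) ℂ} (hM : M.IsHermitian)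
    (x : EuclideanSpace ℂ (Fin N)) :
    ‖TE M x‖ ^ 2 = ∑ j, hM.eigenvalues j ^ 2 * ‖hM.eigenvectorBasis.repr x j‖ ^ 2 := by
  rw [normsq_eq_sum (b := hM.eigenvectorBasis)]
  apply Finset.sum_congr rfl
  intro j _
  rw [repr_TE hM, norm_mul, mul_pow, Complex.norm_real, Real.norm_eq_abs, sq_abs]

noncomputable def sspan {M : Matrix (Fin N) (Fin N) ℂ} (hM : M.IsHermitian)
    (S : Finset (Fin N)) : Submodule ℂ (EuclideanSpace ℂ (Fin N)) :=
  Submodule.span ℂ (hM.eigenvectorBasis '' (S : Set (Fin N)))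

lemma finrank_sspan {M : Matrix (Fin N) (Fin N) ℂ} (hM : M.IsHermitian) (S : Finset (Fin N)) :
    Module.finrank ℂ (sspan hM S) = S.card := by
  have li : LinearIndependent ℂ (⇑hM.eigenvectorBasis) :=
    hM.eigenvectorBasis.orthonormal.linearIndependent
  have li2 := li.comp (fun j : {j : Fin N // j ∈ S} => (j : Fin N)) Subtype.val_injective
  have h2 := finrank_span_eq_card li2
  rw [Set.range_comp] at h2
  have : Set.range (fun j : {j : Fin N // j ∈ S} => (j : Fin N)) = (S : Set (Fin N)) := by
    ext j; simp
  rw [this] at h2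
  rw [sspan, h2]
  simp

lemma repr_eq_zero_of_mem_sspan {M : Matrix (Fin N) (Fin N) ℂ} (hM : M.IsHermitian)
    {S : Finset (Fin N)} {x : EuclideanSpace ℂ (Fin N)} (hx : x ∈ sspan hM S)
    {j : Fin N} (hj : j ∉ S) : hM.eigenvectorBasis.repr x j = 0 := by
  rw [sspan, ← hM.eigenvectorBasis.coe_toBasis] at hx
  have := (Module.Basis.mem_span_image _).mp hx
  rw [← hM.eigenvectorBasis.coe_toBasis_repr_apply]
  by_contra h
  exact hj (this (Finsupp.mem_support_iff.mpr h))

lemma ex_repr_ne_zero {M : Matrix (Fin N) (Fin N) ℂ} (hM : M.IsHermitian)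
    {x : EuclideanSpace ℂ (Fin N)} (hx : x ≠ 0) :
    ∃ j, hM.eigenvectorBasis.repr x j ≠ 0 := by
  by_contra h
  push_neg at h
  apply hx
  apply hM.eigenvectorBasis.repr.injective
  ext j
  simp [h j]

lemma qf_lt_of_mem_sspan {M : Matrix (Fin N) (Fin N) ℂ} (hM : M.IsHermitian)
    {S : Finset (Fin N)} {s : ℝ} (hS : ∀ j ∈ S, hM.eigenvalues j < s)
    {x : EuclideanSpace ℂ (Fin N)} (hx : x ∈ sspan hM S) (hx0 : x ≠ 0) :
    qf M x < s * ‖x‖ ^ 2 := by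
  rw [qf_eq_sum hM, normsq_eq_sum (b := hM.eigenvectorBasis), Finset.mul_sum]
  obtain ⟨j₀, hj₀⟩ := ex_repr_ne_zero hM hx0
  have hj₀S : j₀ ∈ S := by
    by_contra h
    exact hj₀ (repr_eq_zero_of_mem_sspan hM hx h)
  apply Finset.sum_lt_sum
  · intro j _
    rcases eq_or_ne (hM.eigenvectorBasis.repr x j) 0 with h | h
    · simp [h]
    · have hjS : j ∈ S := by
        by_contra hc
        exact h (repr_eq_zero_of_mem_sspan hM hx hc)
      have : (0:ℝ) < ‖hM.eigenvectorBasis.repr x j‖ ^ 2 :=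
        pow_pos (norm_pos_iff.mpr h) 2
      nlinarith [hS j hjS]
  · refine ⟨j₀, Finset.mem_univ j₀, ?_⟩
    have : (0:ℝ) < ‖hM.eigenvectorBasis.repr x j₀‖ ^ 2 :=
      pow_pos (norm_pos_iff.mpr hj₀) 2
    nlinarith [hS j₀ hj₀S]

lemma qf_gt_of_mem_sspan {M : Matrix (Fin N) (Fin N) ℂ} (hM : M.IsHermitian)
    {S : Finset (Fin N)} {s : ℝ} (hS : ∀ j ∈ S, s < hM.eigenvalues j)
    {x : EuclideanSpace ℂ (Fin N)} (hx : x ∈ sspan hM S) (hx0 : x ≠ 0) :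
    s * ‖x‖ ^ 2 < qf M x := by
  rw [qf_eq_sum hM, normsq_eq_sum (b := hM.eigenvectorBasis), Finset.mul_sum]
  obtain ⟨j₀, hj₀⟩ := ex_repr_ne_zero hM hx0
  have hj₀S : j₀ ∈ S := by
    by_contra h
    exact hj₀ (repr_eq_zero_of_mem_sspan hM hx h)
  apply Finset.sum_lt_sum
  · intro j _
    rcases eq_or_ne (hM.eigenvectorBasis.repr x j) 0 with h | h
    · simp [h]
    · have hjS : j ∈ S := by
        by_contra hc
        exact h (repr_eq_zero_of_mem_sspan hM hx hc)
      have : (0:ℝ) < ‖hM.eigenvectorBasis.repr x j‖ ^ 2 :=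
        pow_pos (norm_pos_iff.mpr h) 2
      nlinarith [hS j hjS]
  · refine ⟨j₀, Finset.mem_univ j₀, ?_⟩
    have : (0:ℝ) < ‖hM.eigenvectorBasis.repr x j₀‖ ^ 2 :=
      pow_pos (norm_pos_iff.mpr hj₀) 2
    nlinarith [hS j₀ hj₀S]

lemma dim_le_card_le {M : Matrix (Fin N) (Fin N) ℂ} (hM : M.IsHermitian) (s : ℝ)
    (V : Submodule ℂ (EuclideanSpace ℂ (Fin N)))
    (h : ∀ x ∈ V, qf M x ≤ s * ‖x‖ ^ 2) :
    Module.finrank ℂ V ≤ (Finset.univ.filter fun j => hM.eigenvalues j ≤ s).card := by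
  by_contra hc
  push_neg at hc
  classical
  set S : Finset (Fin N) := Finset.univ.filter fun j => hM.eigenvalues j ≤ s with hS
  set W := sspan hM Sᶜ with hW
  have hWrank : Module.finrank ℂ W = Sᶜ.card := finrank_sspan hM Sᶜ
  have hcompl : Sᶜ.card = N - S.card := by
    rw [Finset.card_compl]
    simp
  have hSle : S.card ≤ N := by
    have := Finset.card_filter_le Finset.univ (fun j => hM.eigenvalues j ≤ s)
    simpa using this
  have hsum := Submodule.finrank_sup_add_finrank_inf_eq V W
  have hle : Module.finrank ℂ ↥(V ⊔ W) ≤ N := by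
    have := Submodule.finrank_le (V ⊔ W)
    simpa using this
  have hpos : 0 < Module.finrank ℂ ↥(V ⊓ W) := by omega
  have hne : V ⊓ W ≠ ⊥ := by
    intro hbot
    rw [hbot] at hpos
    simp at hpos
  obtain ⟨x, hxmem, hx0⟩ := (Submodule.ne_bot_iff _).mp hne
  have hxV : x ∈ V := hxmem.1
  have hxW : x ∈ W := hxmem.2
  have hgt : s * ‖x‖ ^ 2 < qf M x := by
    apply qf_gt_of_mem_sspan hM _ hxW hx0
    intro j hj
    have := Finset.mem_compl.mp hj
    rw [hS] at this
    simp at this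
    linarith
  linarith [h x hxV]

lemma cnt_mono {M M' : Matrix (Fin N) (Fin N) ℂ} (hM : M.IsHermitian) (hM' : M'.IsHermitian)
    (c s : ℝ) (h : ∀ x, qf M x + c * ‖x‖ ^ 2 ≤ qf M' x) :
    (Finset.univ.filter fun j => hM'.eigenvalues j < s).card
      ≤ (Finset.univ.filter fun j => hM.eigenvalues j ≤ s - c).card := by
  classical
  set S' : Finset (Fin N) := Finset.univ.filter fun j => hM'.eigenvalues j < s with hS'
  have hrank : Module.finrank ℂ (sspan hM' S') = S'.card := finrank_sspan hM' S'
  rw [← hrank]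
  apply dim_le_card_le hM (s - c)
  intro x hx
  rcases eq_or_ne x 0 with rfl | hx0
  · simp [qf]
  · have h1 : qf M' x < s * ‖x‖ ^ 2 := by
      apply qf_lt_of_mem_sspan hM' _ hx hx0
      intro j hj
      rw [hS'] at hj
      simpa using hj
    have := h x
    nlinarith

lemma good_of_eigen {M : Matrix (Fin N) (Fin N) ℂ} (hM : M.IsHermitian) {κ : ℝ} (hκ : 0 < κ)
    (h : ∀ j, hM.eigenvalues j ≤ -κ ∨ κ ≤ hM.eigenvalues j) :
    IsUnit M ∧ opN N M⁻¹ ≤ κ⁻¹ := by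
  have key : ∀ x : EuclideanSpace ℂ (Fin N), κ * ‖x‖ ≤ ‖TE M x‖ := by
    intro x
    have hsq : (κ * ‖x‖) ^ 2 ≤ ‖TE M x‖ ^ 2 := by
      rw [normsq_TE_eq_sum hM, mul_pow, normsq_eq_sum (b := hM.eigenvectorBasis),
        Finset.mul_sum]
      apply Finset.sum_le_sum
      intro j _
      have h2 : κ ^ 2 ≤ hM.eigenvalues j ^ 2 := by
        rcases h j with h' | h' <;> nlinarith
      nlinarith [sq_nonneg ‖hM.eigenvectorBasis.repr x j‖]
    have h1 : 0 ≤ κ * ‖x‖ := by positivity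
    nlinarith [norm_nonneg (TE M x)]
  have hdet : M.det ≠ 0 := by
    rw [hM.det_eq_prod_eigenvalues]
    apply Finset.prod_ne_zero_iff.mpr
    intro j _
    rcases h j with h' | h' <;>
      · intro h0
        rw [RCLike.ofReal_eq_zero] at h0
        rw [h0] at h'
        linarith
  have hunit : IsUnit M := by
    rw [Matrix.isUnit_iff_isUnit_det]
    exact isUnit_iff_ne_zero.mpr hdet
  refine ⟨hunit, ?_⟩
  apply ContinuousLinearMap.opNorm_le_bound _ (by positivity)
  intro y
  set x := TE M⁻¹ y with hx
  have hMx : TE M x = y := by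
    rw [hx]
    have : TE M (TE M⁻¹ y) = TE (M * M⁻¹) y := by
      rw [TE, TE, TE, _root_.map_mul]
      rfl
    rw [this, Matrix.mul_nonsing_inv _ (isUnit_iff_ne_zero.mpr hdet), TE, _root_.map_one]
    rfl
  have := key x
  rw [hMx] at this
  calc ‖x‖ = κ⁻¹ * (κ * ‖x‖) := by field_simp
  _ ≤ κ⁻¹ * ‖y‖ := by
      apply mul_le_mul_of_nonneg_left this (by positivity)

lemma bad_cnt {M : Matrix (Fin N) (Fin N) ℂ} (hM : M.IsHermitian) {κ : ℝ} (hκ : 0 < κ)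
    (hbad : ¬ IsUnit M ∨ κ⁻¹ < opN N M⁻¹) :
    (Finset.univ.filter fun j => hM.eigenvalues j ≤ -κ).card
      < (Finset.univ.filter fun j => hM.eigenvalues j < κ).card := by
  have hex : ∃ j, -κ < hM.eigenvalues j ∧ hM.eigenvalues j < κ := by
    by_contra hc
    push_neg at hc
    have h' : ∀ j, hM.eigenvalues j ≤ -κ ∨ κ ≤ hM.eigenvalues j := by
      intro j
      rcases le_or_gt (hM.eigenvalues j) (-κ) with h | h
      · exact Or.inl h
      · exact Or.inr (hc j h)
    obtain ⟨h1, h2⟩ := good_of_eigen hM hκ h'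
    rcases hbad with hb | hb
    · exact hb h1
    · linarith
  obtain ⟨j₀, hj₀1, hj₀2⟩ := hex
  apply Finset.card_lt_card
  rw [Finset.ssubset_iff_of_subset]
  · exact ⟨j₀, by simp [hj₀2], by simp; linarith⟩
  · intro j hj
    simp only [Finset.mem_filter, Finset.mem_univ, true_and] at hj ⊢
    linarith

lemma qf_add (P Q : Matrix (Fin N) (Fin N) ℂ) (x : EuclideanSpace ℂ (Fin N)) :
    qf (P + Q) x = qf P x + qf Q x := by
  rw [qf, qf, qf, TE, TE, TE, map_add, ContinuousLinearMap.add_apply, inner_add_right,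
    Complex.add_re]

lemma normsq_coord (x : EuclideanSpace ℂ (Fin N)) : ‖x‖ ^ 2 = ∑ i, ‖x i‖ ^ 2 := by
  rw [EuclideanSpace.norm_eq, Real.sq_sqrt (by positivity)]

lemma qf_diag (v : Fin N → ℝ) (x : EuclideanSpace ℂ (Fin N)) :
    qf (Matrix.diagonal fun j => (v j : ℂ)) x = ∑ i, v i * ‖x i‖ ^ 2 := by
  rw [qf, TE_apply, PiLp.inner_apply, Complex.re_sum]
  apply Finset.sum_congr rfl
  intro i _
  have hcoord : (WithLp.equiv 2 ((Fin N) → ℂ)).symm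
      ((Matrix.diagonal fun j => (v j : ℂ)) *ᵥ (WithLp.equiv 2 _ x)) i
      = (v i : ℂ) * x i := by
    have : ((Matrix.diagonal fun j => (v j : ℂ)) *ᵥ (WithLp.equiv 2 _ x)) i
        = (v i : ℂ) * (WithLp.equiv 2 _ x) i := Matrix.mulVec_diagonal _ _ i
    exact this
  rw [RCLike.inner_apply, hcoord]
  have : ((v i : ℂ) * x i) * (starRingEnd ℂ) (x i)
      = (v i : ℂ) * ((starRingEnd ℂ) (x i) * x i) := by ring
  rw [this, RCLike.conj_mul]
  simp [RCLike.ofReal_pow]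
  left
  norm_cast

lemma TE_hasDerivAt (B B' : ℝ → Matrix (Fin N) (Fin N) ℂ)
    (hB : ∀ i j, ∀ t ∈ Set.Ioo (-1 : ℝ) 1, HasDerivAt (fun u => B u i j) (B' t i j) t)
    {u : ℝ} (hu : u ∈ Set.Ioo (-1 : ℝ) 1) (x : EuclideanSpace ℂ (Fin N)) :
    HasDerivAt (fun s => TE (B s) x) (TE (B' u) x) u := by
  set e := EuclideanSpace.equiv (Fin N) ℂ
  have hpi : HasDerivAt (fun s => e (TE (B s) x)) (e (TE (B' u) x)) u := by
    rw [hasDerivAt_pi]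
    intro i
    have hci : ∀ (C : Matrix (Fin N) (Fin N) ℂ), e (TE C x) i = ∑ j, C i j * x j := by
      intro C
      rw [TE_apply]
      have : e ((WithLp.equiv 2 ((Fin N) → ℂ)).symm (C *ᵥ (WithLp.equiv 2 _ x)))
          = C *ᵥ (WithLp.equiv 2 _ x) := rfl
      rw [this]
      rfl
    simp only [hci]
    apply HasDerivAt.fun_sum
    intro j _
    exact (hB i j u hu).mul_const (x j)
  have := (((e.symm : (Fin N → ℂ) →L[ℂ] EuclideanSpace ℂ (Fin N)).restrictScalars
    ℝ).hasFDerivAt (x := e (TE (B u) x))).comp_hasDerivAt u hpi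
  simp at this
  have hfun : (⇑e.symm ∘ fun s => e (TE (B s) x)) = fun s => TE (B s) x := by
    funext s
    simp [e]
  rw [hfun] at this
  exact this

lemma Bdiff_bound (B B' : ℝ → Matrix (Fin N) (Fin N) ℂ)
    (hB : ∀ i j, ∀ t ∈ Set.Ioo (-1 : ℝ) 1, HasDerivAt (fun u => B u i j) (B' t i j) t)
    {c : ℝ} (hc : 0 ≤ c) (hB'c : ∀ t ∈ Set.Ioo (-1 : ℝ) 1, opN N (B' t) ≤ c)
    {t t' : ℝ} (ht : t ∈ Set.Ioo (-1 : ℝ) 1) (ht' : t' ∈ Set.Ioo (-1 : ℝ) 1) (htt : t ≤ t')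
    (x : EuclideanSpace ℂ (Fin N)) :
    ‖TE (B t') x - TE (B t) x‖ ≤ c * (t' - t) * ‖x‖ := by
  have hsub : Set.Icc t t' ⊆ Set.Ioo (-1 : ℝ) 1 := by
    intro u hu
    exact ⟨lt_of_lt_of_le ht.1 hu.1, lt_of_le_of_lt hu.2 ht'.2⟩
  have hg : ∀ u ∈ Set.Icc t t',
      HasDerivWithinAt (fun s => TE (B s) x) (TE (B' u) x) (Set.Icc t t') u :=
    fun u hu => (TE_hasDerivAt B B' hB (hsub hu) x).hasDerivWithinAt
  have hbound : ∀ u ∈ Set.Icc t t', ‖TE (B' u) x‖ ≤ c * ‖x‖ := by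
    intro u hu
    calc ‖TE (B' u) x‖ ≤ ‖TE (B' u)‖ * ‖x‖ := (TE (B' u)).le_opNorm x
    _ ≤ c * ‖x‖ := mul_le_mul_of_nonneg_right (hB'c u (hsub hu)) (norm_nonneg x)
  have := Convex.norm_image_sub_le_of_norm_hasDerivWithin_le hg hbound (convex_Icc t t')
    (Set.left_mem_Icc.mpr htt) (Set.right_mem_Icc.mpr htt)
  rw [Real.norm_eq_abs, abs_of_nonneg (by linarith)] at this
  calc ‖TE (B t') x - TE (B t) x‖ ≤ c * ‖x‖ * (t' - t) := this
  _ = c * (t' - t) * ‖x‖ := by ring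

lemma slope_ge (f f' : ℝ → ℝ) {δ : ℝ}
    (hf : ∀ t ∈ Set.Ioo (-1 : ℝ) 1, HasDerivAt f (f' t) t)
    (hf' : ∀ t ∈ Set.Ioo (-1 : ℝ) 1, δ ≤ f' t)
    {t t' : ℝ} (ht : t ∈ Set.Ioo (-1 : ℝ) 1) (ht' : t' ∈ Set.Ioo (-1 : ℝ) 1) (htt : t ≤ t') :
    δ * (t' - t) ≤ f t' - f t := by
  rcases eq_or_lt_of_le htt with rfl | hlt
  · simp
  have hsub : Set.Icc t t' ⊆ Set.Ioo (-1 : ℝ) 1 := fun u hu =>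
    ⟨lt_of_lt_of_le ht.1 hu.1, lt_of_le_of_lt hu.2 ht'.2⟩
  have hcont : ContinuousOn f (Set.Icc t t') := fun u hu =>
    ((hf u (hsub hu)).continuousAt).continuousWithinAt
  have hderiv : ∀ u ∈ Set.Ioo t t', HasDerivAt f (f' u) u := fun u hu =>
    hf u (hsub ⟨le_of_lt hu.1, le_of_lt hu.2⟩)
  obtain ⟨c, hc, hceq⟩ := exists_hasDerivAt_eq_slope f f' hlt hcont hderiv
  have hδ : δ ≤ (f t' - f t) / (t' - t) := by
    rw [← hceq]
    exact hf' c (hsub ⟨le_of_lt hc.1, le_of_lt hc.2⟩)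
  have h2 : 0 < t' - t := by linarith
  calc δ * (t' - t) ≤ ((f t' - f t) / (t' - t)) * (t' - t) :=
        mul_le_mul_of_nonneg_right hδ (le_of_lt h2)
  _ = f t' - f t := by field_simp

lemma qf_shift {δ : ℝ} (hδ : 0 < δ)
    (a : Fin N → ℝ → ℝ) (a' : Fin N → ℝ → ℝ)
    (ha : ∀ j, ∀ t ∈ Set.Ioo (-1 : ℝ) 1, HasDerivAt (a j) (a' j t) t)
    (ha'δ : ∀ j, ∀ t ∈ Set.Ioo (-1 : ℝ) 1, δ ≤ a' j t)
    (B : ℝ → Matrix (Fin N) (Fin N) ℂ) (B' : ℝ → Matrix (Fin N) (Fin N) ℂ)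
    (hB : ∀ i j, ∀ t ∈ Set.Ioo (-1 : ℝ) 1, HasDerivAt (fun u => B u i j) (B' t i j) t)
    (hB'δ : ∀ t ∈ Set.Ioo (-1 : ℝ) 1, opN N (B' t) ≤ δ / 2)
    {t t' : ℝ} (ht : t ∈ Set.Ioo (-1 : ℝ) 1) (ht' : t' ∈ Set.Ioo (-1 : ℝ) 1) (htt : t ≤ t')
    (x : EuclideanSpace ℂ (Fin N)) :
    qf (Matrix.diagonal (fun j => (a j t : ℂ)) + B t) x + (δ / 2 * (t' - t)) * ‖x‖ ^ 2
      ≤ qf (Matrix.diagonal (fun j => (a j t' : ℂ)) + B t') x := by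
  rw [qf_add, qf_add]
  have hdiag : qf (Matrix.diagonal fun j => (a j t : ℂ)) x + δ * (t' - t) * ‖x‖ ^ 2
      ≤ qf (Matrix.diagonal fun j => (a j t' : ℂ)) x := by
    rw [qf_diag, qf_diag, normsq_coord, Finset.mul_sum, ← Finset.sum_add_distrib]
    apply Finset.sum_le_sum
    intro i _
    have := slope_ge (a i) (a' i) (ha i) (ha'δ i) ht ht' htt
    nlinarith [sq_nonneg ‖x i‖]
  have hBpart : |qf (B t') x - qf (B t) x| ≤ δ / 2 * (t' - t) * ‖x‖ ^ 2 := by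
    have heq : qf (B t') x - qf (B t) x
        = Complex.re (inner ℂ x (TE (B t') x - TE (B t) x)) := by
      rw [qf, qf, inner_sub_right, Complex.sub_re]
    rw [heq]
    have h1 : |Complex.re (inner ℂ x (TE (B t') x - TE (B t) x))|
        ≤ ‖(inner ℂ x (TE (B t') x - TE (B t) x) : ℂ)‖ := Complex.abs_re_le_norm _
    have h2 : ‖(inner ℂ x (TE (B t') x - TE (B t) x) : ℂ)‖
        ≤ ‖x‖ * ‖TE (B t') x - TE (B t) x‖ := norm_inner_le_norm _ _
    have h3 := Bdiff_bound B B' hB (by linarith) hB'δ ht ht' htt x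
    calc |Complex.re (inner ℂ x (TE (B t') x - TE (B t) x))|
        ≤ ‖x‖ * ‖TE (B t') x - TE (B t) x‖ := le_trans h1 h2
    _ ≤ ‖x‖ * (δ / 2 * (t' - t) * ‖x‖) :=
        mul_le_mul_of_nonneg_left h3 (norm_nonneg x)
    _ = δ / 2 * (t' - t) * ‖x‖ ^ 2 := by ring
  have := abs_le.mp hBpart
  linarith


lemma vol_fin (S : Set ℝ) (hS : S ⊆ Set.Ioo (-1 : ℝ) 1) : volume S ≠ ⊤ := by
  have : volume S ≤ volume (Set.Ioo (-1 : ℝ) 1) := measure_mono hS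
  rw [Real.volume_Ioo] at this
  exact ne_top_of_le_ne_top ENNReal.ofReal_ne_top this

lemma chain_aux (L : ℝ) (hL : 0 < L) :
    ∀ (n : ℕ) (S : Set ℝ), S ⊆ Set.Ioo (-1 : ℝ) 1 →
    (∀ f : Fin (n + 1) → ℝ, (∀ i, f i ∈ S) →
      (∀ i : Fin n, f i.castSucc + L ≤ f i.succ) → False) →
    ∀ ε : ℝ, 0 < ε → volume S ≤ ENNReal.ofReal (n * (L + ε)) := by
  intro n
  induction n with
  | zero =>
    intro S hS h ε hε
    have : S = ∅ := by
      rw [Set.eq_empty_iff_forall_notMem]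
      intro t ht
      exact h (fun _ => t) (fun _ => ht) (fun i => i.elim0)
    simp [this]
  | succ n ih =>
    intro S hS h ε hε
    rcases le_or_gt (volume S) (ENNReal.ofReal ε) with hle | hgt
    · refine le_trans hle (ENNReal.ofReal_le_ofReal ?_)
      have hn : (0:ℝ) ≤ (n:ℝ) := Nat.cast_nonneg n
      push_cast
      nlinarith
    · -- find c with g c = ε
      set g : ℝ → ℝ := fun u => (volume (S ∩ Set.Iio u)).toReal with hg
      have hfin : ∀ u, volume (S ∩ Set.Iio u) ≠ ⊤ :=
        fun u => ne_top_of_le_ne_top (vol_fin S hS) (measure_mono Set.inter_subset_left)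
      have hmono : ∀ u v, u ≤ v → g u ≤ g v := by
        intro u v huv
        apply ENNReal.toReal_le_toReal (hfin u) (hfin v) |>.mpr
        exact measure_mono (Set.inter_subset_inter_right _ (Set.Iio_subset_Iio huv))
      have hlip : ∀ u v, u ≤ v → g v ≤ g u + (v - u) := by
        intro u v huv
        have hcov : S ∩ Set.Iio v ⊆ (S ∩ Set.Iio u) ∪ Set.Ico u v := by
          intro x hx
          rcases lt_or_ge x u with h' | h'
          · exact Or.inl ⟨hx.1, h'⟩
          · exact Or.inr ⟨h', hx.2⟩
        have := le_trans (measure_mono hcov) (measure_union_le (μ := volume) _ _)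
        rw [Real.volume_Ico] at this
        calc g v ≤ ((volume (S ∩ Set.Iio u)) + ENNReal.ofReal (v - u)).toReal := by
              apply ENNReal.toReal_le_toReal (hfin v) _ |>.mpr this
              exact ENNReal.add_ne_top.mpr ⟨hfin u, ENNReal.ofReal_ne_top⟩
        _ = g u + (v - u) := by
              rw [ENNReal.toReal_add (hfin u) ENNReal.ofReal_ne_top,
                ENNReal.toReal_ofReal (by linarith)]
      have hcont : Continuous g := by
        apply LipschitzWith.continuous (K := 1)
        apply LipschitzWith.of_dist_le_mul
        intro u v
        rw [Real.dist_eq, Real.dist_eq, NNReal.coe_one, one_mul]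
        rcases le_total u v with huv | hvu
        · rw [abs_sub_comm, abs_of_nonneg (by linarith [hmono u v huv]),
            abs_of_nonpos (by linarith)]
          linarith [hlip u v huv]
        · rw [abs_of_nonneg (by linarith [hmono v u hvu]), abs_of_nonneg (by linarith)]
          linarith [hlip v u hvu]
      have hg0 : g (-1) = 0 := by
        have : S ∩ Set.Iio (-1 : ℝ) = ∅ := by
          rw [Set.eq_empty_iff_forall_notMem]
          intro x hx
          exact absurd (hS hx.1).1 (not_lt.mpr (le_of_lt hx.2))
        simp [hg, this]
      have hg1 : ε < g 1 := by
        have : S ∩ Set.Iio (1 : ℝ) = S := by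
          apply Set.inter_eq_self_of_subset_left
          intro x hx
          exact Set.mem_Iio.mpr (hS hx).2
        rw [hg]
        simp only [this]
        rw [show ε = (ENNReal.ofReal ε).toReal from (ENNReal.toReal_ofReal (le_of_lt hε)).symm]
        exact ENNReal.toReal_lt_toReal ENNReal.ofReal_ne_top (vol_fin S hS) |>.mpr hgt
      have hivt : ∃ c ∈ Set.Icc (-1 : ℝ) 1, g c = ε := by
        have : ε ∈ Set.Icc (g (-1)) (g 1) := ⟨by rw [hg0]; exact le_of_lt hε, le_of_lt hg1⟩
        exact intermediate_value_Icc (by norm_num) hcont.continuousOn this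
      obtain ⟨c, _, hc⟩ := hivt
      have hvolc : volume (S ∩ Set.Iio c) = ENNReal.ofReal ε := by
        have hc' : (volume (S ∩ Set.Iio c)).toReal = ε := hc
        rw [← ENNReal.ofReal_toReal (hfin c), hc']
      have hne : (S ∩ Set.Iio c).Nonempty := by
        apply nonempty_of_measure_ne_zero (μ := volume)
        rw [hvolc]
        simp [ne_eq, ENNReal.ofReal_eq_zero, not_le, hε]
      obtain ⟨t₀, ht₀S, ht₀c⟩ := hne
      set S' := S ∩ Set.Ici (t₀ + L) with hS'
      have hchain' : ∀ f : Fin (n + 1) → ℝ, (∀ i, f i ∈ S') →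
          (∀ i : Fin n, f i.castSucc + L ≤ f i.succ) → False := by
        intro f hf hgap
        apply h (Fin.cons t₀ f)
        · intro i
          refine Fin.cases ?_ ?_ i
          · exact ht₀S
          · intro j
            rw [Fin.cons_succ]
            exact (hf j).1
        · intro i
          refine Fin.cases ?_ ?_ i
          · simp only [Fin.castSucc_zero, Fin.cons_zero]
            rw [Fin.cons_succ]
            exact (hf 0).2
          · intro j
            rw [← Fin.succ_castSucc, Fin.cons_succ, Fin.cons_succ]
            exact hgap j
      have hIH := ih S' (Set.Subset.trans Set.inter_subset_left hS) hchain' ε hε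
      have hcover : S ⊆ (S ∩ Set.Iio c) ∪ (Set.Ico t₀ (t₀ + L) ∪ S') := by
        intro x hx
        rcases lt_or_ge x c with h' | h'
        · exact Or.inl ⟨hx, h'⟩
        · rcases lt_or_ge x (t₀ + L) with h'' | h''
          · refine Or.inr (Or.inl ⟨?_, h''⟩)
            linarith [le_trans (le_of_lt ht₀c) h']
          · exact Or.inr (Or.inr ⟨hx, h''⟩)
      calc volume S ≤ volume ((S ∩ Set.Iio c) ∪ (Set.Ico t₀ (t₀ + L) ∪ S')) :=
            measure_mono hcover
      _ ≤ volume (S ∩ Set.Iio c) + (volume (Set.Ico t₀ (t₀ + L)) + volume S') :=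
            le_trans (measure_union_le _ _) (by
              gcongr
              exact measure_union_le _ _)
      _ ≤ ENNReal.ofReal ε + (ENNReal.ofReal L + ENNReal.ofReal (n * (L + ε))) := by
            rw [hvolc, Real.volume_Ico]
            gcongr
            simp
      _ = ENNReal.ofReal ((n + 1 : ℕ) * (L + ε)) := by
            rw [← ENNReal.ofReal_add (by positivity) (by positivity),
              ← ENNReal.ofReal_add (by positivity) (by positivity)]
            congr 1
            push_cast
            ring

lemma measure_le_of_no_chain (L : ℝ) (hL : 0 < L) (n : ℕ) (S : Set ℝ)
    (hS : S ⊆ Set.Ioo (-1 : ℝ) 1)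
    (h : ∀ f : Fin (n + 1) → ℝ, (∀ i, f i ∈ S) →
      (∀ i : Fin n, f i.castSucc + L ≤ f i.succ) → False) :
    volume S ≤ ENNReal.ofReal (n * L) := by
  apply ENNReal.le_of_forall_pos_le_add
  intro ε hε _
  set εr : ℝ := (ε : ℝ) / ((n : ℝ) + 1) with hεr
  have hεrpos : 0 < εr := by positivity
  have := chain_aux L hL n S hS h εr hεrpos
  apply le_trans this
  have h1 : (n : ℝ) * (L + εr) = n * L + n * εr := by ring
  rw [h1]
  refine le_trans ENNReal.ofReal_add_le (add_le_add le_rfl ?_)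
  · have hεnn : (0:ℝ) ≤ (ε : ℝ) := ε.coe_nonneg
    have : (n : ℝ) * εr ≤ (ε : ℝ) := by
      have h3 : (0:ℝ) < (n:ℝ) + 1 := by positivity
      rw [hεr, mul_div_assoc', div_le_iff₀ h3]
      nlinarith [Nat.cast_nonneg (α := ℝ) n]
    calc ENNReal.ofReal ((n:ℝ) * εr) ≤ ENNReal.ofReal (ε : ℝ) := ENNReal.ofReal_le_ofReal this
    _ = (ε : ENNReal) := ENNReal.ofReal_coe_nnreal

/-- Lemma 4.5 (Eliasson–Kuksin): if `A(t) = diag(a_j(t))` with `a_j` of class `C¹`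
on `I = (-1,1)` and `a_j'(t) ≥ δ`, and `B(t)` is Hermitian of class `C¹` with
`‖B'(t)‖ ≤ δ/2`, then for every `κ > 0`,
`mes { t ∈ I : ‖(A(t)+B(t))⁻¹‖ > κ⁻¹ (or not invertible) } ≤ 4 N κ / δ`. -/
theorem stmt_14 (N : ℕ) (δ κ : ℝ) (hδ : 0 < δ) (hκ : 0 < κ)
    (a : Fin N → ℝ → ℝ) (a' : Fin N → ℝ → ℝ)
    (ha : ∀ j, ∀ t ∈ Set.Ioo (-1 : ℝ) 1, HasDerivAt (a j) (a' j t) t)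
    (ha'c : ∀ j, ContinuousOn (a' j) (Set.Ioo (-1 : ℝ) 1))
    (ha'δ : ∀ j, ∀ t ∈ Set.Ioo (-1 : ℝ) 1, δ ≤ a' j t)
    (B : ℝ → Matrix (Fin N) (Fin N) ℂ) (B' : ℝ → Matrix (Fin N) (Fin N) ℂ)
    (hBherm : ∀ t ∈ Set.Ioo (-1 : ℝ) 1, (B t).IsHermitian)
    (hB : ∀ i j, ∀ t ∈ Set.Ioo (-1 : ℝ) 1, HasDerivAt (fun u => B u i j) (B' t i j) t)
    (hB'c : ∀ i j, ContinuousOn (fun t => B' t i j) (Set.Ioo (-1 : ℝ) 1))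
    (hB'δ : ∀ t ∈ Set.Ioo (-1 : ℝ) 1, opN N (B' t) ≤ δ / 2) :
    volume {t ∈ Set.Ioo (-1 : ℝ) 1 |
        ¬ IsUnit (Matrix.diagonal (fun j => (a j t : ℂ)) + B t) ∨
        κ⁻¹ < opN N (Matrix.diagonal (fun j => (a j t : ℂ)) + B t)⁻¹}
      ≤ ENNReal.ofReal (4 * N * κ / δ) := by
  classical
  set M : ℝ → Matrix (Fin N) (Fin N) ℂ :=
    fun t => Matrix.diagonal (fun j => (a j t : ℂ)) + B t with hM
  have hMherm : ∀ t ∈ Set.Ioo (-1 : ℝ) 1, (M t).IsHermitian := by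
    intro t ht
    apply Matrix.IsHermitian.add _ (hBherm t ht)
    rw [Matrix.IsHermitian, Matrix.diagonal_conjTranspose]
    have hstar : (star fun j => ((a j t : ℂ))) = fun j => ((a j t : ℂ)) := by
      funext j
      simp [Pi.star_apply, Complex.conj_ofReal]
    rw [hstar]
  set E : Set ℝ := {t ∈ Set.Ioo (-1 : ℝ) 1 |
      ¬ IsUnit (M t) ∨ κ⁻¹ < opN N (M t)⁻¹} with hE
  have hEsub : E ⊆ Set.Ioo (-1 : ℝ) 1 := fun t ht => ht.1
  set L : ℝ := 4 * κ / δ with hLdef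
  have hL : 0 < L := by positivity
  have hnochain : ∀ f : Fin (N + 1) → ℝ, (∀ i, f i ∈ E) →
      (∀ i : Fin N, f i.castSucc + L ≤ f i.succ) → False := by
    intro f hf hgap
    have hfI : ∀ i, f i ∈ Set.Ioo (-1 : ℝ) 1 := fun i => (hf i).1
    have hfherm : ∀ i, (M (f i)).IsHermitian := fun i => hMherm (f i) (hfI i)
    set d : Fin (N + 1) → ℕ := fun i =>
      (Finset.univ.filter fun j => (hfherm i).eigenvalues j ≤ -κ).card with hd
    set c : Fin (N + 1) → ℕ := fun i =>
      (Finset.univ.filter fun j => (hfherm i).eigenvalues j < κ).card with hc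
    have key1 : ∀ i, d i < c i := fun i => bad_cnt (hfherm i) hκ (hf i).2
    have key2 : ∀ i : Fin N, c i.succ ≤ d i.castSucc := by
      intro i
      set t := f i.castSucc
      set t' := f i.succ
      have hgt : t + L ≤ t' := hgap i
      have htt : t ≤ t' := by linarith
      have hshift := qf_shift hδ a a' ha ha'δ B B' hB hB'δ
        (hfI i.castSucc) (hfI i.succ) htt
      have hmono := cnt_mono (hfherm i.castSucc) (hfherm i.succ)
        (δ / 2 * (t' - t)) κ hshift
      apply le_trans hmono
      apply Finset.card_le_card
      intro j hj
      simp only [Finset.mem_filter, Finset.mem_univ, true_and] at hj ⊢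
      have hc2 : 2 * κ ≤ δ / 2 * (t' - t) := by
        have h1 : L ≤ t' - t := by linarith
        have h2 : δ / 2 * L ≤ δ / 2 * (t' - t) :=
          mul_le_mul_of_nonneg_left h1 (by linarith)
        have h3 : δ / 2 * L = 2 * κ := by
          rw [hLdef]
          field_simp
          ring
        linarith
      linarith
    have claim : ∀ m : ℕ, (hm : m ≤ N) → d ⟨m, by omega⟩ + m ≤ d ⟨0, by omega⟩ := by
      intro m
      induction m with
      | zero => intro _; simp
      | succ m ihm =>
        intro hm
        have hm' : m ≤ N := by omega
        have hmN : m < N := by omega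
        have h1 := key2 ⟨m, hmN⟩
        have hcs : (⟨m, hmN⟩ : Fin N).castSucc = (⟨m, by omega⟩ : Fin (N+1)) := rfl
        have hsc : (⟨m, hmN⟩ : Fin N).succ = (⟨m + 1, by omega⟩ : Fin (N+1)) := rfl
        rw [hcs, hsc] at h1
        have h2 := key1 ⟨m + 1, by omega⟩
        have h3 := ihm hm'
        omega
    have h0 := claim N (le_refl N)
    have hlast := key1 ⟨0, by omega⟩
    have hcard : c ⟨0, by omega⟩ ≤ N := by
      rw [hc]
      calc (Finset.univ.filter fun j => (hfherm ⟨0, by omega⟩).eigenvalues j < κ).card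
          ≤ Finset.univ.card := Finset.card_filter_le _ _
      _ = N := by simp
    omega
  have hbound := measure_le_of_no_chain L hL N E hEsub hnochain
  apply le_trans hbound
  apply le_of_eq
  congr 1
  rw [hLdef]
  field_simp
end
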